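/- arXiv:2507.07428 — 10 statements merged into one kernel-verified Lean document; each statement's English description precedes it below -/
import Mathlib

section
/- Let A be a maximally monotone operator on a real Hilbert space X and let α, β > 0. Then the operator (α/β)·Id + (1 − α/β)·J_{βA} : X → X is a bijection whose inverse is (β/α)·Id + (1 − β/α)·J_{αA}. -/
open Filter
open scoped RealInnerProductSpace NNReal

/-- A set-valued operator is monotone. -/
def IsMonotoneOp {X : Type*} [NormedAddCommGroup X] [InnerProductSpace ℝ X]
    (A : X → Set X) : Prop :=
  ∀ ⦃x y u v : X⦄, u ∈ A x → v ∈ A y → 0 ≤ ⟪x - y, u - v⟫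

/-- A set-valued operator is maximally monotone. -/
def IsMaximalMonotoneOp {X : Type*} [NormedAddCommGroup X] [InnerProductSpace ℝ X]
    (A : X → Set X) : Prop :=
  IsMonotoneOp A ∧
    ∀ x u : X, (∀ y v : X, v ∈ A y → 0 ≤ ⟪x - y, u - v⟫) → u ∈ A x

/-- `J` is the resolvent of `γ • A`, i.e. `J = (Id + γ A)⁻¹`:
for every `x`, `x ∈ J x + γ • A (J x)`. -/
def IsResolventOf {X : Type*} [NormedAddCommGroup X] [InnerProductSpace ℝ X]
    (J : X → X) (A : X → Set X) (γ : ℝ) : Prop :=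
  ∀ x : X, γ⁻¹ • (x - J x) ∈ A (J x)

lemma resolvent_unique {X : Type*} [NormedAddCommGroup X] [InnerProductSpace ℝ X]
    {A : X → Set X} (hmono : IsMonotoneOp A) {α : ℝ} (hα : 0 < α)
    {z u v : X} (hu : α⁻¹ • (z - u) ∈ A u) (hv : α⁻¹ • (z - v) ∈ A v) : u = v := by
  have h := hmono hu hv
  rw [← smul_sub, real_inner_smul_right] at h
  have hin : ⟪u - v, z - u - (z - v)⟫ = -‖u - v‖ ^ 2 := by
    have : z - u - (z - v) = -(u - v) := by abel
    rw [this, inner_neg_right, real_inner_self_eq_norm_sq]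
  rw [hin] at h
  have hle : ‖u - v‖ ^ 2 ≤ 0 := by nlinarith [inv_pos.mpr hα]
  have : ‖u - v‖ = 0 := by nlinarith [norm_nonneg (u - v)]
  exact sub_eq_zero.mp (norm_eq_zero.mp this)

lemma resolvent_left_inv {X : Type*} [NormedAddCommGroup X] [InnerProductSpace ℝ X]
    {A : X → Set X} (hmono : IsMonotoneOp A)
    {α β : ℝ} (hα : 0 < α) (hβ : 0 < β)
    {Jα Jβ : X → X}
    (hJα : IsResolventOf Jα A α) (hJβ : IsResolventOf Jβ A β) (x : X) :
    (β / α) • ((α / β) • x + (1 - α / β) • Jβ x)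
      + (1 - β / α) • Jα ((α / β) • x + (1 - α / β) • Jβ x) = x := by
  set z := (α / β) • x + (1 - α / β) • Jβ x with hz
  have hmem : α⁻¹ • (z - Jβ x) ∈ A (Jβ x) := by
    have hzβ : α⁻¹ • (z - Jβ x) = β⁻¹ • (x - Jβ x) := by
      rw [hz]
      rw [smul_sub, smul_sub]
      match_scalars <;> field_simp <;> ring
    rw [hzβ]; exact hJβ x
  have heq : Jα z = Jβ x := resolvent_unique hmono hα (hJα z) hmem
  rw [heq, hz]
  match_scalars <;> field_simp <;> ring

theorem resolvent_combination_bijective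
    {X : Type*} [NormedAddCommGroup X] [InnerProductSpace ℝ X] [CompleteSpace X]
    (A : X → Set X) (hA : IsMaximalMonotoneOp A)
    (α β : ℝ) (hα : 0 < α) (hβ : 0 < β)
    (Jα Jβ : X → X)
    (hJα : IsResolventOf Jα A α) (hJβ : IsResolventOf Jβ A β) :
    Function.Bijective (fun x : X => (α / β) • x + (1 - α / β) • Jβ x) ∧
    Function.LeftInverse (fun x : X => (β / α) • x + (1 - β / α) • Jα x)
      (fun x : X => (α / β) • x + (1 - α / β) • Jβ x) ∧
    Function.RightInverse (fun x : X => (β / α) • x + (1 - β / α) • Jα x)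
      (fun x : X => (α / β) • x + (1 - α / β) • Jβ x) := by
  obtain ⟨hmono, -⟩ := hA
  have hL : Function.LeftInverse (fun x : X => (β / α) • x + (1 - β / α) • Jα x)
      (fun x : X => (α / β) • x + (1 - α / β) • Jβ x) :=
    fun x => resolvent_left_inv hmono hα hβ hJα hJβ x
  have hR : Function.RightInverse (fun x : X => (β / α) • x + (1 - β / α) • Jα x)
      (fun x : X => (α / β) • x + (1 - α / β) • Jβ x) :=
    fun x => resolvent_left_inv hmono hβ hα hJβ hJα x
  exact ⟨⟨hL.injective, hR.surjective⟩, hL, hR⟩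
end

section
/- Let A be maximally monotone on a real Hilbert space X, let α, β > 0 with β ≥ α, and set Q := (β/α)·Id + (1 − β/α)·J_{αA}. Then for all z, z̄ ∈ X: ‖Qz − Qz̄‖² + (β²/α² − 1)·‖J_{αA}z − J_{αA}z̄‖² ≤ (β²/α²)·‖z − z̄‖². In particular Q is (β/α)-Lipschitz continuous. -/
open Filter
open scoped RealInnerProductSpace NNReal

theorem relocator_lipschitz_of_ge
    {X : Type*} [NormedAddCommGroup X] [InnerProductSpace ℝ X] [CompleteSpace X]
    (A : X → Set X) (hA : IsMaximalMonotoneOp A)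
    (α β : ℝ) (hα : 0 < α) (hβ : 0 < β) (hβα : α ≤ β)
    (Jα : X → X) (hJα : IsResolventOf Jα A α) :
    (∀ z z' : X,
      ‖((β / α) • z + (1 - β / α) • Jα z) - ((β / α) • z' + (1 - β / α) • Jα z')‖^2
        + (β^2 / α^2 - 1) * ‖Jα z - Jα z'‖^2
      ≤ (β^2 / α^2) * ‖z - z'‖^2) ∧
    (∀ z z' : X,
      ‖((β / α) • z + (1 - β / α) • Jα z) - ((β / α) • z' + (1 - β / α) • Jα z')‖
        ≤ (β / α) * ‖z - z'‖) := by
  set t : ℝ := β / α with ht_def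
  have ht1 : 1 ≤ t := (one_le_div hα).mpr hβα
  have ht0 : 0 < t := lt_of_lt_of_le one_pos ht1
  have htsq : β^2 / α^2 = t^2 := by rw [ht_def, div_pow]
  -- firm nonexpansiveness
  have firm : ∀ z z' : X, ‖Jα z - Jα z'‖^2 ≤ ⟪z - z', Jα z - Jα z'⟫ := by
    intro z z'
    have h := hA.1 (hJα z) (hJα z')
    rw [← smul_sub, real_inner_smul_right] at h
    have h2 : 0 ≤ ⟪Jα z - Jα z', z - Jα z - (z' - Jα z')⟫ :=
      nonneg_of_mul_nonneg_right h (inv_pos.mpr hα)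
    have h3 : z - Jα z - (z' - Jα z') = (z - z') - (Jα z - Jα z') := by abel
    rw [h3, inner_sub_right, real_inner_self_eq_norm_sq, real_inner_comm] at h2
    linarith
  have key : ∀ z z' : X,
      ‖((β / α) • z + (1 - β / α) • Jα z) - ((β / α) • z' + (1 - β / α) • Jα z')‖^2
        + (β^2 / α^2 - 1) * ‖Jα z - Jα z'‖^2
      ≤ (β^2 / α^2) * ‖z - z'‖^2 := by
    intro z z'
    have hd : ((β / α) • z + (1 - β / α) • Jα z) - ((β / α) • z' + (1 - β / α) • Jα z')
        = t • (z - z') + (1 - t) • (Jα z - Jα z') := by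
      rw [ht_def]; module
    rw [hd, htsq]
    set d := z - z'
    set p := Jα z - Jα z'
    have expand : ‖t • d + (1 - t) • p‖^2
        = t^2 * ‖d‖^2 + 2 * (t * (1 - t)) * ⟪d, p⟫ + (1 - t)^2 * ‖p‖^2 := by
      rw [norm_add_sq_real, real_inner_smul_left, real_inner_smul_right,
        norm_smul, norm_smul, mul_pow, mul_pow]
      simp [Real.norm_eq_abs, sq_abs]
      ring
    rw [expand]
    have hfirm := firm z z'
    nlinarith [mul_nonneg (mul_nonneg ht0.le (sub_nonneg.mpr ht1))
      (sub_nonneg.mpr hfirm)]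
  refine ⟨key, fun z z' => ?_⟩
  have h1 := key z z'
  have h2 : (0:ℝ) ≤ (β^2 / α^2 - 1) * ‖Jα z - Jα z'‖^2 := by
    apply mul_nonneg _ (sq_nonneg _)
    rw [htsq]; nlinarith
  have hn := norm_nonneg (((β / α) • z + (1 - β / α) • Jα z)
    - ((β / α) • z' + (1 - β / α) • Jα z'))
  have hb : 0 ≤ (β / α) * ‖z - z'‖ := mul_nonneg ht0.le (norm_nonneg _)
  nlinarith [htsq, norm_nonneg (z - z')]
end

section
/- Let A, B be maximally monotone on a real Hilbert space X, and for γ > 0 let T_γ := Id − J_{γA} + J_{γB}(2J_{γA} − Id) be the Douglas–Rachford operator. For α, β > 0, the map (β/α)·Id + (1 − β/α)·J_{αA}, restricted to Fix T_α, is a bijection from Fix T_α onto Fix T_β, with inverse given by the restriction of (α/β)·Id + (1 − α/β)·J_{βA} to Fix T_β. -/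
open Filter
open scoped RealInnerProductSpace NNReal

lemma res_unique {X : Type*} [NormedAddCommGroup X] [InnerProductSpace ℝ X]
    {A : X → Set X} (hA : IsMonotoneOp A) {J : X → X} {γ : ℝ} (hγ : 0 < γ)
    (hJ : IsResolventOf J A γ) {y q : X} (hq : γ⁻¹ • (y - q) ∈ A q) : J y = q := by
  have h := hA (hJ y) hq
  have e : γ⁻¹ • (y - J y) - γ⁻¹ • (y - q) = -(γ⁻¹ • (J y - q)) := by module
  rw [e, inner_neg_right, real_inner_smul_right, real_inner_self_eq_norm_sq] at h
  have hγ' : 0 < γ⁻¹ := inv_pos.2 hγ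
  have hn : ‖J y - q‖ ^ 2 ≤ 0 := by nlinarith
  have : ‖J y - q‖ = 0 := by nlinarith [norm_nonneg (J y - q)]
  exact sub_eq_zero.1 (norm_eq_zero.1 this)

lemma DR_step {X : Type*} [NormedAddCommGroup X] [InnerProductSpace ℝ X]
    {A B : X → Set X} (hA : IsMonotoneOp A) (hB : IsMonotoneOp B)
    (JA JB : ℝ → X → X)
    (hJA : ∀ γ : ℝ, 0 < γ → IsResolventOf (JA γ) A γ)
    (hJB : ∀ γ : ℝ, 0 < γ → IsResolventOf (JB γ) B γ)
    (α β : ℝ) (hα : 0 < α) (hβ : 0 < β) {x : X}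
    (hx : x - JA α x + JB α ((2:ℝ) • JA α x - x) = x) :
    JA β ((β / α) • x + (1 - β / α) • JA α x) = JA α x ∧
    (((β / α) • x + (1 - β / α) • JA α x) - JA β ((β / α) • x + (1 - β / α) • JA α x)
      + JB β ((2:ℝ) • JA β ((β / α) • x + (1 - β / α) • JA α x)
          - ((β / α) • x + (1 - β / α) • JA α x))
      = (β / α) • x + (1 - β / α) • JA α x) := by
  have hα' := hα.ne'
  have hβ' := hβ.ne'
  set p := JA α x with hp
  set y := (β / α) • x + (1 - β / α) • p with hy
  have hApx : α⁻¹ • (x - p) ∈ A p := hJA α hα x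
  have hfix : JB α ((2:ℝ) • p - x) = p := by
    have h := hx
    linear_combination (norm := module) h
  have hBp : α⁻¹ • (((2:ℝ) • p - x) - p) ∈ B p := by
    have h := hJB α hα ((2:ℝ) • p - x)
    rwa [hfix] at h
  have e1 : β⁻¹ • (y - p) = α⁻¹ • (x - p) := by
    rw [hy]; match_scalars <;> field_simp <;> ring
  have hJAy : JA β y = p := res_unique hA hβ (hJA β hβ) (by rw [e1]; exact hApx)
  have e2 : β⁻¹ • (((2:ℝ) • p - y) - p) = α⁻¹ • (((2:ℝ) • p - x) - p) := by
    rw [hy]; match_scalars <;> field_simp <;> ring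
  have hJBy : JB β ((2:ℝ) • p - y) = p :=
    res_unique hB hβ (hJB β hβ) (by rw [e2]; exact hBp)
  refine ⟨hJAy, ?_⟩
  rw [hJAy, hJBy]
  abel

theorem DR_fixedPoint_bijection
    {X : Type*} [NormedAddCommGroup X] [InnerProductSpace ℝ X] [CompleteSpace X]
    (A B : X → Set X) (hA : IsMaximalMonotoneOp A) (hB : IsMaximalMonotoneOp B)
    (JA JB : ℝ → X → X)
    (hJA : ∀ γ : ℝ, 0 < γ → IsResolventOf (JA γ) A γ)
    (hJB : ∀ γ : ℝ, 0 < γ → IsResolventOf (JB γ) B γ)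
    (α β : ℝ) (hα : 0 < α) (hβ : 0 < β) :
    Set.BijOn (fun x : X => (β / α) • x + (1 - β / α) • JA α x)
      {x : X | x - JA α x + JB α ((2:ℝ) • JA α x - x) = x}
      {x : X | x - JA β x + JB β ((2:ℝ) • JA β x - x) = x} ∧
    Set.InvOn (fun x : X => (α / β) • x + (1 - α / β) • JA β x)
      (fun x : X => (β / α) • x + (1 - β / α) • JA α x)
      {x : X | x - JA α x + JB α ((2:ℝ) • JA α x - x) = x}
      {x : X | x - JA β x + JB β ((2:ℝ) • JA β x - x) = x} := by
  have hα' := hα.ne'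
  have hβ' := hβ.ne'
  have hmt1 : Set.MapsTo (fun x : X => (β / α) • x + (1 - β / α) • JA α x)
      {x : X | x - JA α x + JB α ((2:ℝ) • JA α x - x) = x}
      {x : X | x - JA β x + JB β ((2:ℝ) • JA β x - x) = x} := fun x hx =>
    (DR_step hA.1 hB.1 JA JB hJA hJB α β hα hβ hx).2
  have hmt2 : Set.MapsTo (fun x : X => (α / β) • x + (1 - α / β) • JA β x)
      {x : X | x - JA β x + JB β ((2:ℝ) • JA β x - x) = x}
      {x : X | x - JA α x + JB α ((2:ℝ) • JA α x - x) = x} := fun x hx =>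
    (DR_step hA.1 hB.1 JA JB hJA hJB β α hβ hα hx).2
  have hinv : Set.InvOn (fun x : X => (α / β) • x + (1 - α / β) • JA β x)
      (fun x : X => (β / α) • x + (1 - β / α) • JA α x)
      {x : X | x - JA α x + JB α ((2:ℝ) • JA α x - x) = x}
      {x : X | x - JA β x + JB β ((2:ℝ) • JA β x - x) = x} := by
    constructor
    · intro x hx
      have h := (DR_step hA.1 hB.1 JA JB hJA hJB α β hα hβ hx).1
      simp only
      rw [h]
      match_scalars <;> field_simp <;> ring
    · intro x hx
      have h := (DR_step hA.1 hB.1 JA JB hJA hJB β α hβ hα hx).1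
      simp only
      rw [h]
      match_scalars <;> field_simp <;> ring
  exact ⟨hinv.bijOn hmt1 hmt2, hinv⟩
end

section
/- Parametric demiclosedness principle: Let D ⊆ X be a nonempty weakly sequentially closed subset of a real Hilbert space X, Γ ⊆ ℝ a nonempty closed set, and (T_γ)_{γ∈Γ} a family of nonexpansive operators from D to X such that for each x ∈ D the map γ ↦ T_γ x is norm-continuous. If (x_n) ⊆ D converges weakly to x ∈ D, γ_n → γ̄ in Γ, and x_n − T_{γ_n} x_n → u strongly, then x − T_{γ̄} x = u. -/
open Filter
open scoped RealInnerProductSpace NNReal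

theorem parametric_demiclosedness_principle
    {X : Type*} [NormedAddCommGroup X] [InnerProductSpace ℝ X] [CompleteSpace X]
    (D : Set X) (hDne : D.Nonempty)
    (hDweakclosed : ∀ (z : ℕ → X) (w : X), (∀ n, z n ∈ D) →
      (∀ y : X, Tendsto (fun n => ⟪y, z n⟫) atTop (nhds ⟪y, w⟫)) → w ∈ D)
    (Γ : Set ℝ) (hΓne : Γ.Nonempty) (hΓcl : IsClosed Γ)
    (T : ℝ → X → X)
    (hTnonexp : ∀ γ ∈ Γ, ∀ x ∈ D, ∀ y ∈ D, ‖T γ x - T γ y‖ ≤ ‖x - y‖)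
    (hTcont : ∀ x ∈ D, ContinuousOn (fun γ => T γ x) Γ)
    (xseq : ℕ → X) (hxD : ∀ n, xseq n ∈ D) (x : X) (hxmem : x ∈ D)
    (hweak : ∀ y : X, Tendsto (fun n => ⟪y, xseq n⟫) atTop (nhds ⟪y, x⟫))
    (γseq : ℕ → ℝ) (hγΓ : ∀ n, γseq n ∈ Γ)
    (γbar : ℝ) (hγbar : γbar ∈ Γ)
    (hγconv : Tendsto γseq atTop (nhds γbar))
    (u : X)
    (hu : Tendsto (fun n => xseq n - T (γseq n) (xseq n)) atTop (nhds u)) :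
    x - T γbar x = u := by
  -- boundedness of the weakly convergent sequence
  obtain ⟨M, hM⟩ : ∃ M : ℝ, ∀ n, ‖xseq n‖ ≤ M := by
    have h := banach_steinhaus (g := fun n => innerSL ℝ (xseq n)) ?_
    · obtain ⟨C, hC⟩ := h
      exact ⟨C, fun n => by simpa [innerSL_apply_norm] using hC n⟩
    · intro y
      have hconv : Tendsto (fun n => |⟪y, xseq n⟫|) atTop (nhds |⟪y, x⟫|) :=
        (hweak y).abs
      obtain ⟨C, hC⟩ := hconv.bddAbove_range
      refine ⟨C, fun n => ?_⟩
      have : |⟪y, xseq n⟫| ≤ C := hC ⟨n, rfl⟩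
      simpa [innerSL_apply_apply, Real.norm_eq_abs, real_inner_comm] using this
  -- continuity in the parameter
  have hTγ : Tendsto (fun n => T (γseq n) x) atTop (nhds (T γbar x)) := by
    have h1 : Tendsto γseq atTop (nhdsWithin γbar Γ) :=
      tendsto_nhdsWithin_of_tendsto_nhds_of_eventually_within _ hγconv
        (Eventually.of_forall hγΓ)
    exact (hTcont x hxmem γbar hγbar).tendsto.comp h1
  set v : X := x - u - T γbar x with hv
  set vseq : ℕ → X := fun n => x - (xseq n - T (γseq n) (xseq n)) - T (γseq n) x with hvseq
  have hvconv : Tendsto vseq atTop (nhds v) := by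
    exact (tendsto_const_nhds.sub hu).sub hTγ
  -- key inequality from nonexpansiveness
  have hkey : ∀ n, 2 * ⟪xseq n - x, vseq n⟫ + ‖vseq n‖ ^ 2 ≤ 0 := by
    intro n
    have hne : ‖T (γseq n) (xseq n) - T (γseq n) x‖ ≤ ‖xseq n - x‖ :=
      hTnonexp _ (hγΓ n) _ (hxD n) _ hxmem
    have heq : T (γseq n) (xseq n) - T (γseq n) x = (xseq n - x) + vseq n := by
      simp only [hvseq]; abel
    have hsq : ‖(xseq n - x) + vseq n‖ ^ 2 ≤ ‖xseq n - x‖ ^ 2 := by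
      rw [← heq]
      exact pow_le_pow_left₀ (norm_nonneg _) hne 2
    have hexp : ‖(xseq n - x) + vseq n‖ ^ 2
        = ‖xseq n - x‖ ^ 2 + 2 * ⟪xseq n - x, vseq n⟫ + ‖vseq n‖ ^ 2 := by
      rw [← real_inner_self_eq_norm_sq, ← real_inner_self_eq_norm_sq,
        ← real_inner_self_eq_norm_sq, inner_add_add_self, real_inner_comm (vseq n)]
      ring
    nlinarith [hsq, hexp]
  -- pass to the limit
  have hlim : Tendsto (fun n => 2 * ⟪xseq n - x, vseq n⟫ + ‖vseq n‖ ^ 2) atTop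
      (nhds (‖v‖ ^ 2)) := by
    have h1 : Tendsto (fun n => ⟪xseq n - x, v⟫) atTop (nhds 0) := by
      have := hweak v
      have : Tendsto (fun n => ⟪v, xseq n⟫ - ⟪v, x⟫) atTop (nhds (⟪v, x⟫ - ⟪v, x⟫)) :=
        this.sub tendsto_const_nhds
      simpa [real_inner_comm, inner_sub_left, sub_self] using this
    have h2 : Tendsto (fun n => ⟪xseq n - x, vseq n - v⟫) atTop (nhds 0) := by
      apply squeeze_zero_norm (a := fun n => (M + ‖x‖) * ‖vseq n - v‖)
      · intro n
        calc ‖⟪xseq n - x, vseq n - v⟫‖ ≤ ‖xseq n - x‖ * ‖vseq n - v‖ :=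
              norm_inner_le_norm _ _
          _ ≤ (M + ‖x‖) * ‖vseq n - v‖ := by
              apply mul_le_mul_of_nonneg_right _ (norm_nonneg _)
              calc ‖xseq n - x‖ ≤ ‖xseq n‖ + ‖x‖ := norm_sub_le _ _
                _ ≤ M + ‖x‖ := by linarith [hM n]
      · have : Tendsto (fun n => ‖vseq n - v‖) atTop (nhds 0) := by
          have := hvconv.sub (tendsto_const_nhds (x := v))
          simpa using this.norm
        simpa using (tendsto_const_nhds (x := M + ‖x‖)).mul this
    have h3 : Tendsto (fun n => ⟪xseq n - x, vseq n⟫) atTop (nhds 0) := by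
      have := h1.add h2
      simpa [← inner_add_right, sub_add_cancel] using this
    have h4 : Tendsto (fun n => ‖vseq n‖ ^ 2) atTop (nhds (‖v‖ ^ 2)) :=
      (hvconv.norm).pow 2
    have := (h3.const_mul 2).add h4
    simpa using this
  have hle : ‖v‖ ^ 2 ≤ 0 := le_of_tendsto hlim (Eventually.of_forall hkey)
  have hv0 : v = 0 := by
    have : ‖v‖ = 0 := by nlinarith [norm_nonneg v, sq_nonneg ‖v‖]
    simpa using this
  have : x - u - T γbar x = 0 := hv0
  have := sub_eq_zero.mp this
  linear_combination (norm := abel) this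
end

section
/- Deterministic Robbins–Siegmund lemma: Let (α_n), (β_n), (ε_n) be sequences of nonnegative reals with Σ_n ε_n < ∞ and α_{n+1} ≤ (1 + ε_n)α_n − β_n for all n. Then (α_n) converges and Σ_n β_n < ∞. -/
open Filter

theorem robbins_siegmund_deterministic
    (a b e : ℕ → ℝ)
    (ha : ∀ n, 0 ≤ a n) (hb : ∀ n, 0 ≤ b n) (he : ∀ n, 0 ≤ e n)
    (hesum : Summable e)
    (hrec : ∀ n, a (n + 1) ≤ (1 + e n) * a n - b n) :
    (∃ l : ℝ, Tendsto a atTop (nhds l)) ∧ Summable b := by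
  set P : ℕ → ℝ := fun n => ∏ k ∈ Finset.range n, (1 + e k) with hPdef
  have hP1 : ∀ n, 1 ≤ P n := by
    intro n
    show (1:ℝ) ≤ ∏ k ∈ Finset.range n, (1 + e k)
    calc (1:ℝ) = ∏ _k ∈ Finset.range n, 1 := by simp
      _ ≤ ∏ k ∈ Finset.range n, (1 + e k) :=
        Finset.prod_le_prod (by simp) (fun k _ => by linarith [he k])
  have hPpos : ∀ n, 0 < P n := fun n => lt_of_lt_of_le one_pos (hP1 n)
  have hPsucc : ∀ n, P (n + 1) = P n * (1 + e n) := fun n => Finset.prod_range_succ _ n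
  have hPmono : Monotone P := monotone_nat_of_le_succ fun n => by
    rw [hPsucc]; nlinarith [hPpos n, he n]
  set E : ℝ := Real.exp (∑' k, e k) with hEdef
  have hPbd : ∀ n, P n ≤ E := by
    intro n
    calc P n ≤ ∏ k ∈ Finset.range n, Real.exp (e k) :=
        Finset.prod_le_prod (fun k _ => by linarith [he k])
          (fun k _ => by linarith [Real.add_one_le_exp (e k)])
      _ = Real.exp (∑ k ∈ Finset.range n, e k) := (Real.exp_sum _ _).symm
      _ ≤ E := Real.exp_le_exp.2 (Summable.sum_le_tsum _ (fun k _ => he k) hesum)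
  have hPbdd : BddAbove (Set.range P) := ⟨E, by rintro x ⟨n, rfl⟩; exact hPbd n⟩
  have hPlim : Tendsto P atTop (nhds (⨆ n, P n)) := tendsto_atTop_ciSup hPmono hPbdd
  set c : ℕ → ℝ := fun n => a n / P n with hcdef
  have hc0 : ∀ n, 0 ≤ c n := fun n => div_nonneg (ha n) (hPpos n).le
  have key : ∀ n, c (n + 1) + b n / P (n + 1) ≤ c n := by
    intro n
    have h1 : a (n + 1) + b n ≤ (1 + e n) * a n := by linarith [hrec n]
    have hen : (0:ℝ) < 1 + e n := by linarith [he n]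
    have h2 : (a (n + 1) + b n) / P (n + 1) ≤ ((1 + e n) * a n) / P (n + 1) :=
      (div_le_div_iff_of_pos_right (hPpos (n + 1))).2 h1
    have h3 : ((1 + e n) * a n) / P (n + 1) = c n := by
      rw [hPsucc n, mul_comm (1 + e n) (a n), mul_div_mul_right _ _ hen.ne']
    calc c (n + 1) + b n / P (n + 1) = (a (n + 1) + b n) / P (n + 1) := by
          simp [hcdef, add_div]
      _ ≤ ((1 + e n) * a n) / P (n + 1) := h2
      _ = c n := h3
  have hcanti : Antitone c := antitone_nat_of_succ_le fun n => by
    have := key n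
    have : c (n + 1) ≤ c n := by
      have hbn : 0 ≤ b n / P (n + 1) := div_nonneg (hb n) (hPpos _).le
      linarith
    exact this
  have hcbdd : BddBelow (Set.range c) := ⟨0, by rintro x ⟨n, rfl⟩; exact hc0 n⟩
  have hclim : Tendsto c atTop (nhds (⨅ n, c n)) := tendsto_atTop_ciInf hcanti hcbdd
  constructor
  · refine ⟨(⨅ n, c n) * (⨆ n, P n), ?_⟩
    have : ∀ n, a n = c n * P n := fun n => (div_mul_cancel₀ _ (hPpos n).ne').symm
    have h := hclim.mul hPlim
    exact h.congr fun n => (this n).symm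
  · -- partial sums of b n / P (n+1) telescope
    have hsum : ∀ n, ∑ k ∈ Finset.range n, b k / P (k + 1) ≤ c 0 := by
      intro n
      have h : ∀ n, ∑ k ∈ Finset.range n, b k / P (k + 1) ≤ c 0 - c n := by
        intro n
        induction n with
        | zero => simp
        | succ m ih =>
          rw [Finset.sum_range_succ]
          have := key m
          linarith
      linarith [h n, hc0 n]
    refine summable_of_sum_range_le (c := E * c 0) hb fun n => ?_
    · show ∑ k ∈ Finset.range n, b k ≤ E * c 0
      calc ∑ k ∈ Finset.range n, b k ≤ ∑ k ∈ Finset.range n, E * (b k / P (k + 1)) := by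
            refine Finset.sum_le_sum fun k _ => ?_
            have h := mul_le_mul_of_nonneg_right (hPbd (k + 1))
              (div_nonneg (hb k) (hPpos (k + 1)).le)
            have heq : P (k + 1) * (b k / P (k + 1)) = b k := by
              rw [mul_comm, div_mul_cancel₀ _ (hPpos (k + 1)).ne']
            rw [heq] at h
            exact h
        _ = E * ∑ k ∈ Finset.range n, b k / P (k + 1) := by rw [Finset.mul_sum]
        _ ≤ E * c 0 := mul_le_mul_of_nonneg_left (hsum n)
            (le_trans zero_le_one (by rw [hEdef]; exact Real.one_le_exp (tsum_nonneg he)))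
end

section
/- Let (x_n) be a sequence in a real Hilbert space X that is Opial with respect to a nonempty set C ⊆ X (i.e., for every c ∈ C, lim_n ‖x_n − c‖ exists). Then (x_n) is bounded, and (x_n) converges weakly to a point of C if and only if every weak sequential cluster point of (x_n) lies in C. -/
open Filter
open scoped RealInnerProductSpace NNReal

private 
lemma exists_weak_cluster {X : Type*} [NormedAddCommGroup X] [InnerProductSpace ℝ X]
    [CompleteSpace X] (x : ℕ → X) (M : ℝ) (hM : ∀ n, ‖x n‖ ≤ M) :
    ∃ (p : X) (φ : ℕ → ℕ), StrictMono φ ∧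
      ∀ y : X, Tendsto (fun n => ⟪y, x (φ n)⟫) atTop (nhds ⟪y, p⟫) := by
  have hM0 : 0 ≤ M := le_trans (norm_nonneg _) (hM 0)
  -- compactness in ℕ → ℝ
  set S : Set (ℕ → ℝ) := Set.univ.pi (fun _ => Set.Icc (-(M*M)) (M*M)) with hS_def
  have hS : IsCompact S := isCompact_univ_pi (fun _ => isCompact_Icc)
  set g : ℕ → (ℕ → ℝ) := fun n k => ⟪x k, x n⟫ with hg_def
  have hg : ∀ n, g n ∈ S := by
    intro n k _
    have h1 : |⟪x k, x n⟫| ≤ ‖x k‖ * ‖x n‖ := abs_real_inner_le_norm _ _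
    have h2 : ‖x k‖ * ‖x n‖ ≤ M * M :=
      mul_le_mul (hM k) (hM n) (norm_nonneg _) hM0
    have := abs_le.mp (le_trans h1 h2)
    exact ⟨this.1, this.2⟩
  obtain ⟨a, -, φ, hφ, hconv⟩ := hS.tendsto_subseq hg
  have hpt : ∀ k, Tendsto (fun n => ⟪x k, x (φ n)⟫) atTop (nhds (a k)) := by
    intro k
    exact (tendsto_pi_nhds.mp hconv) k
  -- the set of y for which the sequence converges, as a submodule
  set V : Submodule ℝ X :=
    { carrier := {z | ∃ l, Tendsto (fun n => ⟪z, x (φ n)⟫) atTop (nhds l)}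
      add_mem' := by
        rintro z w ⟨l, hl⟩ ⟨l', hl'⟩
        exact ⟨l + l', by simpa [inner_add_left] using hl.add hl'⟩
      zero_mem' := ⟨0, by simp⟩
      smul_mem' := by
        rintro c z ⟨l, hl⟩
        exact ⟨c * l, by simpa [real_inner_smul_left] using hl.const_mul c⟩ } with hV_def
  have hxV : ∀ k, x k ∈ V := fun k => ⟨a k, hpt k⟩
  have hspanV : Submodule.span ℝ (Set.range x) ≤ V :=
    Submodule.span_le.mpr (by rintro _ ⟨k, rfl⟩; exact hxV k)
  -- Y: the closed span
  set Y : Submodule ℝ X := (Submodule.span ℝ (Set.range x)).topologicalClosure with hY_def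
  haveI : CompleteSpace Y :=
    (Submodule.span ℝ (Set.range x)).isClosed_topologicalClosure.completeSpace_coe
  have hxY : ∀ n, x n ∈ Y :=
    fun n => Submodule.le_topologicalClosure _ (Submodule.subset_span (Set.mem_range_self n))
  -- convergence for every y
  have hall : ∀ y : X, ∃ l, Tendsto (fun n => ⟪y, x (φ n)⟫) atTop (nhds l) := by
    intro y
    set w : X := (Y.orthogonalProjectionOnto y : X) with hw_def
    have hwy : ∀ n, ⟪y, x n⟫ = ⟪w, x n⟫ := by
      intro n
      have h1 : y - w ∈ Yᗮ := Submodule.sub_starProjection_mem_orthogonal (K := Y) y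
      have h2 : ⟪x n, y - w⟫ = 0 := (Submodule.mem_orthogonal Y (y - w)).mp h1 (x n) (hxY n)
      have h3 : ⟪y - w, x n⟫ = 0 := by rw [real_inner_comm]; exact h2
      have := inner_sub_left (𝕜 := ℝ) y w (x n)
      linarith [this ▸ h3]
    have hwC : w ∈ closure ((Submodule.span ℝ (Set.range x) : Submodule ℝ X) : Set X) := by
      have h : w ∈ Y := (Y.orthogonalProjectionOnto y).2
      rw [← Submodule.topologicalClosure_coe]
      exact h
    -- Cauchy sequence
    have hcauchy : CauchySeq (fun n => ⟪w, x (φ n)⟫) := by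
      rw [Metric.cauchySeq_iff]
      intro ε hε
      have hM1 : (0:ℝ) < M + 1 := by linarith
      obtain ⟨z, hz_mem, hz⟩ := Metric.mem_closure_iff.mp hwC (ε / (4 * (M + 1)))
        (by positivity)
      have hwz : ∀ k, |⟪w - z, x k⟫| < ε / 4 := by
        intro k
        have h1 : |⟪w - z, x k⟫| ≤ ‖w - z‖ * ‖x k‖ := abs_real_inner_le_norm _ _
        have h2 : ‖w - z‖ * ‖x k‖ ≤ ‖w - z‖ * (M + 1) :=
          mul_le_mul_of_nonneg_left (by linarith [hM k]) (norm_nonneg _)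
        have h3 : ‖w - z‖ < ε / (4 * (M + 1)) := by rwa [dist_eq_norm] at hz
        calc |⟪w - z, x k⟫| ≤ ‖w - z‖ * (M + 1) := le_trans h1 h2
          _ < (ε / (4 * (M + 1))) * (M + 1) := by
              exact mul_lt_mul_of_pos_right h3 hM1
          _ = ε / 4 := by field_simp
      obtain ⟨l, hl⟩ := hspanV hz_mem
      obtain ⟨N, hN⟩ := Metric.cauchySeq_iff.mp hl.cauchySeq (ε / 4) (by positivity)
      refine ⟨N, fun m hm n hn => ?_⟩
      have e1 : ∀ k, ⟪w, x k⟫ = ⟪w - z, x k⟫ + ⟪z, x k⟫ := by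
        intro k
        have := inner_sub_left (𝕜 := ℝ) w z (x k)
        linarith
      have h4 := hN m hm n hn
      rw [Real.dist_eq] at h4 ⊢
      rw [e1 (φ m), e1 (φ n)]
      have h5 := hwz (φ m)
      have h6 := hwz (φ n)
      have h7 : |⟪w - z, x (φ m)⟫ + ⟪z, x (φ m)⟫ - (⟪w - z, x (φ n)⟫ + ⟪z, x (φ n)⟫)|
          ≤ |⟪w - z, x (φ m)⟫| + |⟪w - z, x (φ n)⟫| + |⟪z, x (φ m)⟫ - ⟪z, x (φ n)⟫| := by
        have := abs_sub_abs_le_abs_sub (⟪w - z, x (φ m)⟫) (⟪w - z, x (φ n)⟫)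
        calc |⟪w - z, x (φ m)⟫ + ⟪z, x (φ m)⟫ - (⟪w - z, x (φ n)⟫ + ⟪z, x (φ n)⟫)|
            = |(⟪w - z, x (φ m)⟫ - ⟪w - z, x (φ n)⟫) + (⟪z, x (φ m)⟫ - ⟪z, x (φ n)⟫)| := by
              ring_nf
          _ ≤ |⟪w - z, x (φ m)⟫ - ⟪w - z, x (φ n)⟫| + |⟪z, x (φ m)⟫ - ⟪z, x (φ n)⟫| :=
              abs_add_le _ _
          _ ≤ (|⟪w - z, x (φ m)⟫| + |⟪w - z, x (φ n)⟫|) + |⟪z, x (φ m)⟫ - ⟪z, x (φ n)⟫| := by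
              gcongr; exact abs_sub _ _
      linarith
    obtain ⟨l, hl⟩ := cauchySeq_tendsto_of_complete hcauchy
    exact ⟨l, by simpa only [hwy] using hl⟩
  -- build the limit functional and use Riesz
  choose f hf using hall
  have hbound : ∀ y : X, |f y| ≤ M * ‖y‖ := by
    intro y
    have h1 : ∀ n, |⟪y, x (φ n)⟫| ≤ M * ‖y‖ := by
      intro n
      calc |⟪y, x (φ n)⟫| ≤ ‖y‖ * ‖x (φ n)‖ := abs_real_inner_le_norm _ _
        _ ≤ ‖y‖ * M := mul_le_mul_of_nonneg_left (hM _) (norm_nonneg _)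
        _ = M * ‖y‖ := mul_comm _ _
    exact le_of_tendsto ((hf y).abs) (Eventually.of_forall h1)
  have hadd : ∀ y z : X, f (y + z) = f y + f z := by
    intro y z
    refine tendsto_nhds_unique (hf (y + z)) ?_
    have := (hf y).add (hf z)
    simpa [inner_add_left] using this
  have hsmul : ∀ (c : ℝ) (y : X), f (c • y) = c * f y := by
    intro c y
    refine tendsto_nhds_unique (hf (c • y)) ?_
    have := (hf y).const_mul c
    simpa [real_inner_smul_left] using this
  set L : X →L[ℝ] ℝ := LinearMap.mkContinuous
    { toFun := f, map_add' := hadd, map_smul' := hsmul } M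
    (fun y => by simpa [Real.norm_eq_abs] using hbound y) with hL_def
  set p : X := (InnerProductSpace.toDual ℝ X).symm L with hp_def
  refine ⟨p, φ, hφ, fun y => ?_⟩
  have : ⟪y, p⟫ = f y := by
    rw [real_inner_comm, hp_def, InnerProductSpace.toDual_symm_apply]
    rfl
  rw [this]; exact hf y


private 
lemma cluster_eq_of_opial {X : Type*} [NormedAddCommGroup X] [InnerProductSpace ℝ X]
    (x : ℕ → X) {p q : X}
    (hp' : ∃ lp : ℝ, Tendsto (fun n => ‖x n - p‖) atTop (nhds lp))
    (hq' : ∃ lq : ℝ, Tendsto (fun n => ‖x n - q‖) atTop (nhds lq))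
    {φp φq : ℕ → ℕ} (hφp : Tendsto φp atTop atTop) (hφq : Tendsto φq atTop atTop)
    (hp : ∀ y : X, Tendsto (fun n => ⟪y, x (φp n)⟫) atTop (nhds ⟪y, p⟫))
    (hq : ∀ y : X, Tendsto (fun n => ⟪y, x (φq n)⟫) atTop (nhds ⟪y, q⟫)) :
    p = q := by
  obtain ⟨lp, hlp⟩ := hp'
  obtain ⟨lq, hlq⟩ := hq'
  set t : ℕ → ℝ := fun n => 2 * ⟪q, x n⟫ - 2 * ⟪p, x n⟫ + ‖p‖ ^ 2 - ‖q‖ ^ 2 with ht_def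
  have hid : ∀ n, t n = ‖x n - p‖ ^ 2 - ‖x n - q‖ ^ 2 := by
    intro n
    have e1 := norm_sub_sq_real (x n) p
    have e2 := norm_sub_sq_real (x n) q
    have c1 : ⟪x n, p⟫ = ⟪p, x n⟫ := real_inner_comm _ _
    have c2 : ⟪x n, q⟫ = ⟪q, x n⟫ := real_inner_comm _ _
    rw [ht_def]
    dsimp only
    rw [e1, e2, c1, c2]
    ring
  have ht : Tendsto t atTop (nhds (lp ^ 2 - lq ^ 2)) := by
    have h1 : Tendsto (fun n => ‖x n - p‖ ^ 2 - ‖x n - q‖ ^ 2) atTop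
        (nhds (lp ^ 2 - lq ^ 2)) := ((hlp.pow 2).sub (hlq.pow 2))
    exact (funext hid : t = _) ▸ h1
  have htp : Tendsto (fun n => t (φp n)) atTop
      (nhds (2 * ⟪q, p⟫ - 2 * ⟪p, p⟫ + ‖p‖ ^ 2 - ‖q‖ ^ 2)) := by
    have := ((((hp q).const_mul 2).sub ((hp p).const_mul 2)).add_const (‖p‖ ^ 2)).sub_const
      (‖q‖ ^ 2)
    simpa using this
  have htq : Tendsto (fun n => t (φq n)) atTop
      (nhds (2 * ⟪q, q⟫ - 2 * ⟪p, q⟫ + ‖p‖ ^ 2 - ‖q‖ ^ 2)) := by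
    have := ((((hq q).const_mul 2).sub ((hq p).const_mul 2)).add_const (‖p‖ ^ 2)).sub_const
      (‖q‖ ^ 2)
    simpa using this
  have e1 : 2 * ⟪q, p⟫ - 2 * ⟪p, p⟫ + ‖p‖ ^ 2 - ‖q‖ ^ 2 = lp ^ 2 - lq ^ 2 :=
    tendsto_nhds_unique htp (ht.comp hφp)
  have e2 : 2 * ⟪q, q⟫ - 2 * ⟪p, q⟫ + ‖p‖ ^ 2 - ‖q‖ ^ 2 = lp ^ 2 - lq ^ 2 :=
    tendsto_nhds_unique htq (ht.comp hφq)
  have key : ⟪q - p, q - p⟫ = 0 := by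
    have c : ⟪p, q⟫ = ⟪q, p⟫ := real_inner_comm _ _
    have := inner_sub_left (𝕜 := ℝ) q p (q - p)
    have h2 := inner_sub_right (𝕜 := ℝ) q q p
    have h3 := inner_sub_right (𝕜 := ℝ) p q p
    linarith
  have : q - p = 0 := inner_self_eq_zero.mp key
  have : q = p := by rwa [sub_eq_zero] at this
  exact this.symm


theorem opial_bounded_and_weak_convergence
    {X : Type*} [NormedAddCommGroup X] [InnerProductSpace ℝ X] [CompleteSpace X]
    (C : Set X) (hC : C.Nonempty) (x : ℕ → X)
    (hOpial : ∀ c ∈ C, ∃ l : ℝ, Tendsto (fun n => ‖x n - c‖) atTop (nhds l)) :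
    Bornology.IsBounded (Set.range x) ∧
    ((∃ p ∈ C, ∀ y : X, Tendsto (fun n => ⟪y, x n⟫) atTop (nhds ⟪y, p⟫)) ↔
      (∀ p : X, (∃ φ : ℕ → ℕ, StrictMono φ ∧
        ∀ y : X, Tendsto (fun n => ⟪y, x (φ n)⟫) atTop (nhds ⟪y, p⟫)) → p ∈ C)) := by
  obtain ⟨c0, hc0⟩ := hC
  obtain ⟨l0, hl0⟩ := hOpial c0 hc0
  obtain ⟨R, hR⟩ := hl0.bddAbove_range
  have hMn : ∀ n, ‖x n‖ ≤ R + ‖c0‖ := by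
    intro n
    have h1 : ‖x n - c0‖ ≤ R := hR (Set.mem_range_self n)
    calc ‖x n‖ = ‖(x n - c0) + c0‖ := by rw [sub_add_cancel]
      _ ≤ ‖x n - c0‖ + ‖c0‖ := norm_add_le _ _
      _ ≤ R + ‖c0‖ := by linarith
  constructor
  · exact isBounded_iff_forall_norm_le.mpr ⟨R + ‖c0‖, by rintro _ ⟨n, rfl⟩; exact hMn n⟩
  constructor
  · rintro ⟨p, hpC, hp⟩ q ⟨φ, hφ, hq⟩
    have heq : ∀ y : X, ⟪y, q⟫ = ⟪y, p⟫ := fun y =>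
      tendsto_nhds_unique (hq y) ((hp y).comp hφ.tendsto_atTop)
    have h1 := heq (q - p)
    have h2 := inner_sub_right (𝕜 := ℝ) (q - p) q p
    have key : ⟪q - p, q - p⟫ = 0 := by
      rw [h2]; linarith
    have : q - p = 0 := inner_self_eq_zero.mp key
    have : q = p := by rwa [sub_eq_zero] at this
    rw [this]; exact hpC
  · intro H
    obtain ⟨p, φ, hφ, hp⟩ := exists_weak_cluster x (R + ‖c0‖) hMn
    have hpC : p ∈ C := H p ⟨φ, hφ, hp⟩
    refine ⟨p, hpC, fun y => ?_⟩
    apply tendsto_of_subseq_tendsto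
    intro ns hns
    obtain ⟨ψ, hψ, hcomp⟩ := strictMono_subseq_of_tendsto_atTop hns
    obtain ⟨q, χ, hχ, hq⟩ := exists_weak_cluster (fun n => x (ns (ψ n))) (R + ‖c0‖)
      (fun n => hMn _)
    have hq' : ∀ y : X, Tendsto (fun n => ⟪y, x (((ns ∘ ψ) ∘ χ) n)⟫) atTop (nhds ⟪y, q⟫) :=
      fun y => hq y
    have hqC : q ∈ C := H q ⟨(ns ∘ ψ) ∘ χ, hcomp.comp hχ, hq'⟩
    have hpq : p = q := cluster_eq_of_opial x (hOpial p hpC) (hOpial q hqC)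
      hφ.tendsto_atTop ((hcomp.comp hχ).tendsto_atTop) hp hq'
    refine ⟨ψ ∘ χ, ?_⟩
    have := hq' y
    rw [← hpq] at this
    exact this
end

section
/- Relocated fixed-point iteration is Opial: Let Γ ⊆ (0,∞), let (T_γ)_{γ∈Γ} be a family of nonexpansive operators on a real Hilbert space X with Fix T_γ ≠ ∅ for every γ, and let (Q_{δ←γ})_{γ,δ∈Γ} be fixed-point relocators for (T_γ) with Lipschitz constants L_{δ←γ} ≥ 1. Suppose γ_n → γ̄ in Γ and Σ_n (L_{γ_{n+1}←γ_n} − 1) < ∞. Define x_{n+1} := Q_{γ_{n+1}←γ_n} T_{γ_n} x_n starting from x_0 ∈ X. Then for every c ∈ Fix T_{γ̄}, the limit lim_n ‖x_n − c‖ exists; i.e., (x_n) is Opial with respect to Fix T_{γ̄}. -/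
open Filter
open scoped RealInnerProductSpace NNReal

lemma aux_converge (a ε : ℕ → ℝ) (ha : ∀ n, 0 ≤ a n) (hε : ∀ n, 0 ≤ ε n)
    (hrec : ∀ n, a (n+1) ≤ (1 + ε n) * a n) (hsum : Summable ε) :
    ∃ l : ℝ, Tendsto a atTop (nhds l) := by
  set P : ℕ → ℝ := fun n => ∏ k ∈ Finset.range n, (1 + ε k) with hP
  have hPpos : ∀ n, 0 < P n := fun n =>
    Finset.prod_pos (fun k _ => by linarith [hε k])
  have hPone : ∀ n, 1 ≤ P n := fun n => by
    have := Finset.prod_le_prod (s := Finset.range n) (f := fun _ => (1:ℝ))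
      (g := fun k => 1 + ε k) (fun k _ => zero_le_one) (fun k _ => by linarith [hε k])
    simpa using this
  have hPmono : Monotone P := monotone_nat_of_le_succ (fun n => by
    rw [hP]; simp only
    rw [Finset.prod_range_succ]
    nlinarith [hPpos n, hε n])
  have hPbdd : ∀ n, P n ≤ Real.exp (∑' k, ε k) := by
    intro n
    calc P n ≤ ∏ k ∈ Finset.range n, Real.exp (ε k) :=
          Finset.prod_le_prod (fun k _ => by linarith [hε k])
            (fun k _ => by linarith [Real.add_one_le_exp (ε k)])
      _ = Real.exp (∑ k ∈ Finset.range n, ε k) := by rw [Real.exp_sum]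
      _ ≤ Real.exp (∑' k, ε k) := Real.exp_le_exp.mpr (Summable.sum_le_tsum _ (fun k _ => hε k) hsum)
  obtain ⟨Pl, hPl⟩ : ∃ Pl, Tendsto P atTop (nhds Pl) :=
    ⟨_, tendsto_atTop_ciSup hPmono ⟨_, fun y ⟨n, hn⟩ => hn ▸ hPbdd n⟩⟩
  have hPlpos : 0 < Pl :=
    lt_of_lt_of_le one_pos (ge_of_tendsto' hPl hPone)
  set b : ℕ → ℝ := fun n => a n / P n with hb
  have hbanti : Antitone b := antitone_nat_of_succ_le (fun n => by
    rw [hb]; simp only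
    rw [div_le_div_iff₀ (hPpos (n+1)) (hPpos n)]
    have h1 : P (n+1) = (1 + ε n) * P n := by
      rw [hP]; simp only; rw [Finset.prod_range_succ]; ring
    calc a (n+1) * P n ≤ ((1 + ε n) * a n) * P n := by
          nlinarith [hPpos n, hrec n]
      _ = a n * P (n+1) := by rw [h1]; ring)
  obtain ⟨bl, hbl⟩ : ∃ bl, Tendsto b atTop (nhds bl) :=
    ⟨_, tendsto_atTop_ciInf hbanti ⟨0, fun y ⟨n, hn⟩ => hn ▸ div_nonneg (ha n) (hPpos n).le⟩⟩
  refine ⟨bl * Pl, ?_⟩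
  have : ∀ n, a n = b n * P n := fun n => (div_mul_cancel₀ _ (hPpos n).ne').symm
  simpa [← this] using hbl.mul hPl

theorem relocated_iteration_opial
    {X : Type*} [NormedAddCommGroup X] [InnerProductSpace ℝ X] [CompleteSpace X]
    (Γ : Set ℝ) (hΓ : Γ ⊆ Set.Ioi (0:ℝ))
    (T : ℝ → X → X)
    (hfix : ∀ γ ∈ Γ, ∃ x : X, T γ x = x)
    (Q : ℝ → ℝ → X → X) (L : ℝ → ℝ → ℝ)
    (hbij : ∀ γ ∈ Γ, ∀ δ ∈ Γ,
      Set.BijOn (Q δ γ) {x : X | T γ x = x} {x : X | T δ x = x})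
    (hcontQ : ∀ γ ∈ Γ, ∀ x : X, T γ x = x → ContinuousOn (fun δ => Q δ γ x) Γ)
    (hsemi : ∀ γ ∈ Γ, ∀ δ ∈ Γ, ∀ ε ∈ Γ, ∀ x : X, T γ x = x →
      Q ε δ (Q δ γ x) = Q ε γ x)
    (hLone : ∀ γ ∈ Γ, ∀ δ ∈ Γ, 1 ≤ L δ γ)
    (hLip : ∀ γ ∈ Γ, ∀ δ ∈ Γ, ∀ x y : X, ‖Q δ γ x - Q δ γ y‖ ≤ L δ γ * ‖x - y‖)
    (γseq : ℕ → ℝ) (hγΓ : ∀ n, γseq n ∈ Γ)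
    (γbar : ℝ) (hγbar : γbar ∈ Γ)
    (hγconv : Tendsto γseq atTop (nhds γbar))
    (hLsum : Summable (fun n => L (γseq (n + 1)) (γseq n) - 1))
    (x : ℕ → X)
    (hxrec : ∀ n, x (n + 1) = Q (γseq (n + 1)) (γseq n) (T (γseq n) (x n)))
    (hnonexp : ∀ γ ∈ Γ, ∀ u v : X, ‖T γ u - T γ v‖ ≤ ‖u - v‖) :
    ∀ c : X, T γbar c = c →
      ∃ l : ℝ, Tendsto (fun n => ‖x n - c‖) atTop (nhds l) := by
  intro c hc
  set cs : ℕ → X := fun n => Q (γseq n) γbar c with hcs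
  have hcfix : ∀ n, T (γseq n) (cs n) = cs n := fun n =>
    (hbij γbar hγbar (γseq n) (hγΓ n)).mapsTo hc
  have hcrec : ∀ n, Q (γseq (n+1)) (γseq n) (cs n) = cs (n+1) := fun n =>
    hsemi γbar hγbar (γseq n) (hγΓ n) (γseq (n+1)) (hγΓ (n+1)) c hc
  set a : ℕ → ℝ := fun n => ‖x n - cs n‖ with ha
  have hεnn : ∀ n, 0 ≤ L (γseq (n+1)) (γseq n) - 1 := fun n => by
    linarith [hLone (γseq n) (hγΓ n) (γseq (n+1)) (hγΓ (n+1))]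
  have harec : ∀ n, a (n+1) ≤ (1 + (L (γseq (n+1)) (γseq n) - 1)) * a n := by
    intro n
    have h1 : a (n+1) ≤ L (γseq (n+1)) (γseq n) * ‖T (γseq n) (x n) - cs n‖ := by
      rw [ha]; simp only
      rw [hxrec n, ← hcrec n]
      exact hLip (γseq n) (hγΓ n) (γseq (n+1)) (hγΓ (n+1)) _ _
    have h2 : ‖T (γseq n) (x n) - cs n‖ ≤ ‖x n - cs n‖ := by
      conv_lhs => rw [← hcfix n]
      exact hnonexp (γseq n) (hγΓ n) _ _
    have hL1 := hLone (γseq n) (hγΓ n) (γseq (n+1)) (hγΓ (n+1))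
    calc a (n+1) ≤ L (γseq (n+1)) (γseq n) * ‖T (γseq n) (x n) - cs n‖ := h1
      _ ≤ L (γseq (n+1)) (γseq n) * ‖x n - cs n‖ := by nlinarith
      _ = (1 + (L (γseq (n+1)) (γseq n) - 1)) * a n := by ring
  obtain ⟨l, hl⟩ := aux_converge a _ (fun n => norm_nonneg _) hεnn harec hLsum
  -- cs → c
  have hQcc : Q γbar γbar c = c := by
    have hmem : Q γbar γbar c ∈ {x : X | T γbar x = x} :=
      (hbij γbar hγbar γbar hγbar).mapsTo hc
    exact (hbij γbar hγbar γbar hγbar).injOn hmem hc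
      (hsemi γbar hγbar γbar hγbar γbar hγbar c hc)
  have hcsc : Tendsto cs atTop (nhds c) := by
    have hcw : ContinuousWithinAt (fun δ => Q δ γbar c) Γ γbar :=
      hcontQ γbar hγbar c hc γbar hγbar
    have htw : Tendsto γseq atTop (nhdsWithin γbar Γ) :=
      tendsto_nhdsWithin_iff.mpr ⟨hγconv, Eventually.of_forall hγΓ⟩
    have := hcw.tendsto.comp htw
    rwa [hQcc] at this
  refine ⟨l, ?_⟩
  have hdiff : Tendsto (fun n => ‖x n - c‖ - a n) atTop (nhds 0) := by
    have hb0 : Tendsto (fun n => ‖cs n - c‖) atTop (nhds 0) := by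
      simpa using ((hcsc.sub (tendsto_const_nhds (x := c))).norm)
    refine squeeze_zero_norm (fun n => ?_) hb0
    have := abs_norm_sub_norm_le (x n - c) (x n - cs n)
    simpa [ha, sub_sub_sub_cancel_left] using this
  have := hl.add hdiff
  simpa using this
end

section
/- Asymptotic regularity of relocated fixed-point iterations: In the setting of the relocated fixed-point iteration x_{n+1} := Q_{γ_{n+1}←γ_n} T_{γ_n} x_n, suppose in addition there exists α ∈ (0,1) such that each T_γ is α-averaged. Then Σ_n ‖T_{γ_n}x_n − x_n‖² < ∞; in particular x_n − T_{γ_n}x_n → 0 strongly. -/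
open Filter
open scoped RealInnerProductSpace NNReal

/-- Auxiliary: recursively relocated fixed point sequence. -/
noncomputable def relocSeq {X : Type*} (Q : ℝ → ℝ → X → X) (γ : ℕ → ℝ) (p0 : X) : ℕ → X
  | 0 => p0
  | (n+1) => Q (γ (n+1)) (γ n) (relocSeq Q γ p0 n)

theorem relocated_iteration_asymptotic_regularity
    {X : Type*} [NormedAddCommGroup X] [InnerProductSpace ℝ X] [CompleteSpace X]
    (Γ : Set ℝ) (hΓ : Γ ⊆ Set.Ioi (0:ℝ))
    (T : ℝ → X → X)
    (hfix : ∀ γ ∈ Γ, ∃ x : X, T γ x = x)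
    (Q : ℝ → ℝ → X → X) (L : ℝ → ℝ → ℝ)
    (hbij : ∀ γ ∈ Γ, ∀ δ ∈ Γ,
      Set.BijOn (Q δ γ) {x : X | T γ x = x} {x : X | T δ x = x})
    (hcontQ : ∀ γ ∈ Γ, ∀ x : X, T γ x = x → ContinuousOn (fun δ => Q δ γ x) Γ)
    (hsemi : ∀ γ ∈ Γ, ∀ δ ∈ Γ, ∀ ε ∈ Γ, ∀ x : X, T γ x = x →
      Q ε δ (Q δ γ x) = Q ε γ x)
    (hLone : ∀ γ ∈ Γ, ∀ δ ∈ Γ, 1 ≤ L δ γ)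
    (hLip : ∀ γ ∈ Γ, ∀ δ ∈ Γ, ∀ x y : X, ‖Q δ γ x - Q δ γ y‖ ≤ L δ γ * ‖x - y‖)
    (γseq : ℕ → ℝ) (hγΓ : ∀ n, γseq n ∈ Γ)
    (γbar : ℝ) (hγbar : γbar ∈ Γ)
    (hγconv : Tendsto γseq atTop (nhds γbar))
    (hLsum : Summable (fun n => L (γseq (n + 1)) (γseq n) - 1))
    (x : ℕ → X)
    (hxrec : ∀ n, x (n + 1) = Q (γseq (n + 1)) (γseq n) (T (γseq n) (x n)))
    (α : ℝ) (hα0 : 0 < α) (hα1 : α < 1)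
    (havg : ∀ γ ∈ Γ, ∀ u v : X,
      ‖T γ u - T γ v‖ ^ 2 + ((1 - α) / α) * ‖(u - T γ u) - (v - T γ v)‖ ^ 2
        ≤ ‖u - v‖ ^ 2) :
    Summable (fun n => ‖T (γseq n) (x n) - x n‖ ^ 2) ∧
    Tendsto (fun n => x n - T (γseq n) (x n)) atTop (nhds 0) := by
  obtain ⟨p0, hp0⟩ := hfix (γseq 0) (hγΓ 0)
  set p : ℕ → X := relocSeq Q γseq p0 with hp
  have hpfix : ∀ n, T (γseq n) (p n) = p n := by
    intro n
    induction n with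
    | zero => exact hp0
    | succ n ih =>
      exact (hbij (γseq n) (hγΓ n) (γseq (n+1)) (hγΓ (n+1))).mapsTo ih
  set c : ℝ := (1 - α) / α with hc
  have hcpos : 0 < c := div_pos (by linarith) hα0
  set d : ℕ → ℝ := fun n => ‖x n - p n‖ ^ 2 with hd
  set r : ℕ → ℝ := fun n => ‖T (γseq n) (x n) - x n‖ ^ 2 with hr
  set Ln : ℕ → ℝ := fun n => L (γseq (n + 1)) (γseq n) with hLn
  set ε : ℕ → ℝ := fun n => Ln n ^ 2 - 1 with hε
  have hLn1 : ∀ n, 1 ≤ Ln n := fun n => hLone _ (hγΓ n) _ (hγΓ (n+1))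
  have hεnn : ∀ n, 0 ≤ ε n := by
    intro n; have := hLn1 n; simp only [hε]; nlinarith
  have hdnn : ∀ n, 0 ≤ d n := fun n => sq_nonneg _
  have hrnn : ∀ n, 0 ≤ r n := fun n => sq_nonneg _
  -- key one-step inequality
  have hstep : ∀ n, d (n+1) + c * r n ≤ (1 + ε n) * d n := by
    intro n
    have h1 : ‖x (n+1) - p (n+1)‖ ≤ Ln n * ‖T (γseq n) (x n) - p n‖ := by
      have := hLip (γseq n) (hγΓ n) (γseq (n+1)) (hγΓ (n+1)) (T (γseq n) (x n)) (p n)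
      rw [hxrec n]
      simpa [hp, relocSeq] using this
    have h1' : ‖x (n+1) - p (n+1)‖ ^ 2 ≤ Ln n ^ 2 * ‖T (γseq n) (x n) - p n‖ ^ 2 := by
      have hnn : 0 ≤ ‖x (n+1) - p (n+1)‖ := norm_nonneg _
      have h2 : 0 ≤ Ln n * ‖T (γseq n) (x n) - p n‖ := hnn.trans h1
      nlinarith
    have h3 := havg (γseq n) (hγΓ n) (x n) (p n)
    rw [hpfix n, sub_self, sub_zero] at h3
    -- h3 : ‖T x n - p n‖^2 + c * ‖x n - T x n‖^2 ≤ ‖x n - p n‖^2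
    have hrs : ‖x n - T (γseq n) (x n)‖ = ‖T (γseq n) (x n) - x n‖ := norm_sub_rev _ _
    rw [hrs] at h3
    have hL2 : 1 ≤ Ln n ^ 2 := by have := hLn1 n; nlinarith
    have hcr : 0 ≤ c * ‖T (γseq n) (x n) - x n‖ ^ 2 := mul_nonneg hcpos.le (sq_nonneg _)
    have h5 : Ln n ^ 2 * (‖T (γseq n) (x n) - p n‖ ^ 2 + c * ‖T (γseq n) (x n) - x n‖ ^ 2)
        ≤ Ln n ^ 2 * ‖x n - p n‖ ^ 2 :=
      mul_le_mul_of_nonneg_left h3 (by positivity)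
    have h6 : c * ‖T (γseq n) (x n) - x n‖ ^ 2
        ≤ Ln n ^ 2 * (c * ‖T (γseq n) (x n) - x n‖ ^ 2) := le_mul_of_one_le_left hcr hL2
    simp only [hε, hd, hr]
    nlinarith [h1', h5, h6]
  -- summability of ε
  have hLnS : ∀ n, Ln n - 1 ≤ ∑' m, (Ln m - 1) := by
    intro n
    exact Summable.le_tsum hLsum n (fun m _ => by linarith [hLn1 m])
  set S : ℝ := ∑' m, (Ln m - 1) with hS
  have hSnn : 0 ≤ S := (by linarith [hLn1 0] : (0:ℝ) ≤ Ln 0 - 1).trans (hLnS 0)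
  have hεS : Summable ε := by
    refine Summable.of_nonneg_of_le hεnn (fun n => ?_) (hLsum.mul_right (S + 2))
    have h1 := hLn1 n
    have h2 := hLnS n
    simp only [hε]
    nlinarith
  set E : ℝ := ∑' n, ε n with hE
  have hEnn : 0 ≤ E := tsum_nonneg hεnn
  set D : ℝ := d 0 * Real.exp E with hD
  have hDnn : 0 ≤ D := mul_nonneg (hdnn 0) (Real.exp_pos _).le
  have hsumεle : ∀ N, ∑ k ∈ Finset.range N, ε k ≤ E :=
    fun N => Summable.sum_le_tsum _ (fun i _ => hεnn i) hεS
  have hdle : ∀ n, d n ≤ D := by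
    intro n
    have key : ∀ n, d n ≤ d 0 * Real.exp (∑ k ∈ Finset.range n, ε k) := by
      intro n
      induction n with
      | zero => simp
      | succ n ih =>
        have h1 : d (n+1) ≤ (1 + ε n) * d n := by
          have := hstep n
          have := mul_nonneg hcpos.le (hrnn n)
          linarith
        have h2 : (1 + ε n) ≤ Real.exp (ε n) := by
          have := Real.add_one_le_exp (ε n); linarith
        calc d (n+1) ≤ (1 + ε n) * d n := h1
          _ ≤ Real.exp (ε n) * (d 0 * Real.exp (∑ k ∈ Finset.range n, ε k)) := by
              have hposd : 0 ≤ d n := hdnn n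
              have h1e : 0 ≤ 1 + ε n := by linarith [hεnn n]
              have := mul_le_mul h2 ih hposd (Real.exp_pos _).le
              nlinarith [mul_le_mul_of_nonneg_left ih h1e,
                mul_le_mul_of_nonneg_right h2 (mul_nonneg (hdnn 0) (Real.exp_pos (∑ k ∈ Finset.range n, ε k)).le)]
          _ = d 0 * Real.exp (∑ k ∈ Finset.range (n+1), ε k) := by
              rw [Finset.sum_range_succ, Real.exp_add]; ring
    calc d n ≤ d 0 * Real.exp (∑ k ∈ Finset.range n, ε k) := key n
      _ ≤ D := by
          exact mul_le_mul_of_nonneg_left (Real.exp_le_exp.mpr (hsumεle n)) (hdnn 0)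
  -- partial sum bound
  have hpartial : ∀ N, ∑ n ∈ Finset.range N, r n ≤ (d 0 + D * E) / c := by
    intro N
    rw [le_div_iff₀ hcpos]
    have h1 : ∀ n, c * r n ≤ (d n - d (n+1)) + ε n * D := by
      intro n
      have := hstep n
      have h2 : (1 + ε n) * d n = d n + ε n * d n := by ring
      have h3 : ε n * d n ≤ ε n * D := mul_le_mul_of_nonneg_left (hdle n) (hεnn n)
      linarith
    calc (∑ n ∈ Finset.range N, r n) * c = ∑ n ∈ Finset.range N, c * r n := by
          rw [Finset.sum_mul]; exact Finset.sum_congr rfl (fun i _ => by ring)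
      _ ≤ ∑ n ∈ Finset.range N, ((d n - d (n+1)) + ε n * D) := Finset.sum_le_sum (fun i _ => h1 i)
      _ = (d 0 - d N) + (∑ n ∈ Finset.range N, ε n) * D := by
          rw [Finset.sum_add_distrib, Finset.sum_range_sub' d, ← Finset.sum_mul]
      _ ≤ d 0 + D * E := by
          have := hdnn N
          have h4 : (∑ n ∈ Finset.range N, ε n) * D ≤ E * D :=
            mul_le_mul_of_nonneg_right (hsumεle N) hDnn
          nlinarith
  have hsum : Summable r := summable_of_sum_range_le hrnn hpartial
  refine ⟨hsum, ?_⟩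
  have hr0 : Tendsto r atTop (nhds 0) := hsum.tendsto_atTop_zero
  have hn0 : Tendsto (fun n => ‖x n - T (γseq n) (x n)‖) atTop (nhds 0) := by
    have h1 : Tendsto (fun n => Real.sqrt (r n)) atTop (nhds 0) := by
      have := (Real.continuous_sqrt.tendsto 0).comp hr0
      simpa [Function.comp_def] using this
    refine h1.congr (fun n => ?_)
    simp only [hr]
    rw [Real.sqrt_sq (norm_nonneg _), norm_sub_rev]
  exact tendsto_zero_iff_norm_tendsto_zero.mpr hn0
end

section
/- Weak convergence of relocated fixed-point iterations: In the setting of the relocated fixed-point iteration x_{n+1} := Q_{γ_{n+1}←γ_n} T_{γ_n} x_n with each T_γ α-averaged (for a common α ∈ (0,1)), Fix T_γ ≠ ∅ for all γ ∈ Γ, and (x, γ) ↦ T_γ x jointly norm-continuous, the sequences (x_n) and (T_{γ_n} x_n) both converge weakly to the same point in Fix T_{γ̄}. -/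
open Filter
open scoped RealInnerProductSpace NNReal

lemma aux_ultrafilter_limit (f : ℕ → ℝ) (M : ℝ) (hf : ∀ n, |f n| ≤ M)
    (𝒰 : Ultrafilter ℕ) : ∃ c : ℝ, Tendsto f (↑𝒰) (nhds c) := by
  have hcpt : IsCompact (Set.Icc (-M) M) := isCompact_Icc
  have hle : ↑(𝒰.map f) ≤ Filter.principal (Set.Icc (-M) M) := by
    rw [Ultrafilter.coe_map, Filter.le_principal_iff]
    exact Filter.mem_map.2 (Filter.univ_mem' (fun n => abs_le.1 (hf n)))
  obtain ⟨c, _, hc⟩ := hcpt.ultrafilter_le_nhds (𝒰.map f) hle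
  exact ⟨c, hc⟩

lemma aux_weak_cluster {X : Type*} [NormedAddCommGroup X] [InnerProductSpace ℝ X]
    [CompleteSpace X] (x : ℕ → X) (M : ℝ) (hM : ∀ n, ‖x n‖ ≤ M)
    (𝒰 : Ultrafilter ℕ) :
    ∃ q : X, ∀ y : X, Tendsto (fun n => ⟪y, x n⟫) (↑𝒰) (nhds ⟪y, q⟫) := by
  have hbd : ∀ y : X, ∀ n, |⟪y, x n⟫| ≤ M * ‖y‖ := by
    intro y n
    calc |⟪y, x n⟫| ≤ ‖y‖ * ‖x n‖ := abs_real_inner_le_norm y (x n)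
    _ ≤ ‖y‖ * M := mul_le_mul_of_nonneg_left (hM n) (norm_nonneg y)
    _ = M * ‖y‖ := mul_comm _ _
  have hlim : ∀ y : X, ∃ c : ℝ, Tendsto (fun n => ⟪y, x n⟫) (↑𝒰) (nhds c) :=
    fun y => aux_ultrafilter_limit _ _ (hbd y) 𝒰
  choose φ hφ using hlim
  have huniq : ∀ (y : X) (c : ℝ), Tendsto (fun n => ⟪y, x n⟫) (↑𝒰) (nhds c) → φ y = c := by
    intro y c hc
    exact tendsto_nhds_unique (hφ y) hc
  have hadd : ∀ y z : X, φ (y + z) = φ y + φ z := by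
    intro y z
    refine huniq _ _ ?_
    have : (fun n => ⟪y + z, x n⟫) = fun n => ⟪y, x n⟫ + ⟪z, x n⟫ := by
      funext n; exact inner_add_left _ _ _
    rw [this]
    exact (hφ y).add (hφ z)
  have hsmul : ∀ (c : ℝ) (y : X), φ (c • y) = c * φ y := by
    intro c y
    refine huniq _ _ ?_
    have : (fun n => ⟪c • y, x n⟫) = fun n => c * ⟪y, x n⟫ := by
      funext n; exact real_inner_smul_left _ _ _
    rw [this]
    exact (hφ y).const_mul c
  let g : X →ₗ[ℝ] ℝ :=
    { toFun := φ, map_add' := hadd, map_smul' := hsmul }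
  have hgbd : ∀ y : X, ‖g y‖ ≤ M * ‖y‖ := by
    intro y
    have h1 : Tendsto (fun n => |⟪y, x n⟫|) (↑𝒰) (nhds |φ y|) := (hφ y).abs
    have h2 : |φ y| ≤ M * ‖y‖ :=
      le_of_tendsto h1 (Filter.Eventually.of_forall (fun n => hbd y n))
    rw [Real.norm_eq_abs]; exact h2
  let G : X →L[ℝ] ℝ := LinearMap.mkContinuous g M hgbd
  refine ⟨(InnerProductSpace.toDual ℝ X).symm G, fun y => ?_⟩
  have : ⟪y, (InnerProductSpace.toDual ℝ X).symm G⟫ = G y := by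
    rw [real_inner_comm]
    exact InnerProductSpace.toDual_symm_apply
  rw [this]
  exact hφ y

lemma aux_quasi_fejer (aa b l : ℕ → ℝ) (c : ℝ) (hc : 0 < c)
    (ha : ∀ n, 0 ≤ aa n) (hb : ∀ n, 0 ≤ b n) (hl : ∀ n, 1 ≤ l n)
    (hsum : Summable (fun n => l n - 1))
    (hrec : ∀ n, aa (n + 1) ^ 2 ≤ (l n) ^ 2 * (aa n ^ 2 - c * b n ^ 2)) :
    Tendsto b atTop (nhds 0) ∧ ∃ ℓ : ℝ, Tendsto aa atTop (nhds ℓ) := by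
  set P : ℕ → ℝ := fun n => ∏ k ∈ Finset.range n, (l k) ^ 2 with hP
  have hPsucc : ∀ n, P (n + 1) = P n * (l n) ^ 2 := by
    intro n; simp [hP, Finset.prod_range_succ]
  have hP1 : ∀ n, 1 ≤ P n := by
    intro n
    induction n with
    | zero => simp [hP]
    | succ m ih =>
      rw [hPsucc]
      nlinarith [hl m]
  have hPpos : ∀ n, 0 < P n := fun n => lt_of_lt_of_le one_pos (hP1 n)
  have hPmono : Monotone P := by
    apply monotone_nat_of_le_succ
    intro n
    rw [hPsucc]
    nlinarith [hPpos n, hl n, sq_nonneg (l n - 1)]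
  set S : ℝ := ∑' n, (l n - 1) with hS
  have hterm : ∀ n, 0 ≤ l n - 1 := fun n => by linarith [hl n]
  set C : ℝ := Real.exp (2 * S) with hC
  have hPC : ∀ n, P n ≤ C := by
    intro n
    have h1 : P n ≤ ∏ k ∈ Finset.range n, Real.exp (2 * (l k - 1)) := by
      apply Finset.prod_le_prod
      · intro k _; positivity
      · intro k _
        have h2 : l k ≤ Real.exp (l k - 1) := by
          have := Real.add_one_le_exp (l k - 1); linarith
        calc (l k) ^ 2 ≤ (Real.exp (l k - 1)) ^ 2 := by
              apply pow_le_pow_left₀ (by linarith [hl k]) h2 2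
        _ = Real.exp (2 * (l k - 1)) := by
              rw [← Real.exp_nat_mul]; ring_nf
    have h3 : ∏ k ∈ Finset.range n, Real.exp (2 * (l k - 1))
        = Real.exp (∑ k ∈ Finset.range n, 2 * (l k - 1)) := (Real.exp_sum _ _).symm
    have h4 : ∑ k ∈ Finset.range n, 2 * (l k - 1) ≤ 2 * S := by
      rw [← Finset.mul_sum]
      have := Summable.sum_le_tsum (Finset.range n) (fun k _ => hterm k) hsum
      linarith
    calc P n ≤ Real.exp (∑ k ∈ Finset.range n, 2 * (l k - 1)) := h3 ▸ h1
    _ ≤ C := Real.exp_le_exp.2 h4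
  have hCpos : 0 < C := Real.exp_pos _
  set A : ℕ → ℝ := fun n => aa n ^ 2 / P n with hA
  have hAnonneg : ∀ n, 0 ≤ A n := fun n => div_nonneg (sq_nonneg _) (hPpos n).le
  have hkey : ∀ n, A (n + 1) ≤ A n - (c / C) * b n ^ 2 := by
    intro n
    have h1 : A (n + 1) ≤ (aa n ^ 2 - c * b n ^ 2) / P n := by
      rw [hA]
      simp only
      rw [hPsucc]
      rw [div_le_div_iff₀ (mul_pos (hPpos n) (by nlinarith [hl n])) (hPpos n)]
      have := hrec n
      nlinarith [hPpos n]
    have h2 : (aa n ^ 2 - c * b n ^ 2) / P n = A n - c * b n ^ 2 / P n := by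
      rw [hA]; simp only; rw [sub_div]
    have h3 : (c / C) * b n ^ 2 ≤ c * b n ^ 2 / P n := by
      have he : (c / C) * b n ^ 2 = c * b n ^ 2 / C := by ring
      rw [he]
      exact div_le_div_of_nonneg_left (by positivity) (hPpos n) (hPC n)
    linarith [h1, h2 ▸ h1]
  have hAanti : Antitone A := by
    apply antitone_nat_of_succ_le
    intro n
    have := hkey n
    nlinarith [sq_nonneg (b n), hc, hCpos, div_pos hc hCpos]
  have hsumb : ∀ n, ∑ k ∈ Finset.range n, b k ^ 2 ≤ A 0 * (C / c) := by
    intro n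
    have htel : (c / C) * ∑ k ∈ Finset.range n, b k ^ 2 ≤ A 0 - A n := by
      induction n with
      | zero => simp
      | succ m ih =>
        rw [Finset.sum_range_succ, mul_add]
        have := hkey m
        linarith
    have hcc : 0 < c / C := div_pos hc hCpos
    have h5 : (c / C) * ∑ k ∈ Finset.range n, b k ^ 2 ≤ A 0 := by
      linarith [hAnonneg n]
    calc ∑ k ∈ Finset.range n, b k ^ 2
        = ((c / C) * ∑ k ∈ Finset.range n, b k ^ 2) * (C / c) := by
          field_simp
    _ ≤ A 0 * (C / c) := mul_le_mul_of_nonneg_right h5 (by positivity)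
  have hsummable : Summable (fun n => b n ^ 2) :=
    summable_of_sum_range_le (fun n => sq_nonneg _) hsumb
  have hb2zero : Tendsto (fun n => b n ^ 2) atTop (nhds 0) := hsummable.tendsto_atTop_zero
  have hbzero : Tendsto b atTop (nhds 0) := by
    have h6 : Tendsto (fun n => Real.sqrt (b n ^ 2)) atTop (nhds (Real.sqrt 0)) :=
      (Real.continuous_sqrt.tendsto 0).comp hb2zero
    simpa [Real.sqrt_sq (hb _)] using h6
  refine ⟨hbzero, ?_⟩
  have hAconv : Tendsto A atTop (nhds (⨅ n, A n)) :=
    tendsto_atTop_ciInf hAanti ⟨0, fun y hy => by obtain ⟨n, rfl⟩ := hy; exact hAnonneg n⟩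
  have hPconv : Tendsto P atTop (nhds (⨆ n, P n)) :=
    tendsto_atTop_ciSup hPmono ⟨C, fun y hy => by obtain ⟨n, rfl⟩ := hy; exact hPC n⟩
  have haa2 : Tendsto (fun n => aa n ^ 2) atTop (nhds ((⨅ n, A n) * (⨆ n, P n))) := by
    have h7 : (fun n => aa n ^ 2) = fun n => A n * P n := by
      funext n; rw [hA]; simp only
      rw [div_mul_eq_mul_div, mul_div_assoc, div_self (hPpos n).ne', mul_one]
    rw [h7]
    exact hAconv.mul hPconv
  refine ⟨Real.sqrt ((⨅ n, A n) * (⨆ n, P n)), ?_⟩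
  have h8 : Tendsto (fun n => Real.sqrt (aa n ^ 2)) atTop
      (nhds (Real.sqrt ((⨅ n, A n) * (⨆ n, P n)))) :=
    (Real.continuous_sqrt.tendsto _).comp haa2
  simpa [Real.sqrt_sq (ha _)] using h8

theorem relocated_iteration_weak_convergence
    {X : Type*} [NormedAddCommGroup X] [InnerProductSpace ℝ X] [CompleteSpace X]
    (Γ : Set ℝ) (hΓ : Γ ⊆ Set.Ioi (0:ℝ))
    (T : ℝ → X → X)
    (hfix : ∀ γ ∈ Γ, ∃ x : X, T γ x = x)
    (Q : ℝ → ℝ → X → X) (L : ℝ → ℝ → ℝ)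
    (hbij : ∀ γ ∈ Γ, ∀ δ ∈ Γ,
      Set.BijOn (Q δ γ) {x : X | T γ x = x} {x : X | T δ x = x})
    (hcontQ : ∀ γ ∈ Γ, ∀ x : X, T γ x = x → ContinuousOn (fun δ => Q δ γ x) Γ)
    (hsemi : ∀ γ ∈ Γ, ∀ δ ∈ Γ, ∀ ε ∈ Γ, ∀ x : X, T γ x = x →
      Q ε δ (Q δ γ x) = Q ε γ x)
    (hLone : ∀ γ ∈ Γ, ∀ δ ∈ Γ, 1 ≤ L δ γ)
    (hLip : ∀ γ ∈ Γ, ∀ δ ∈ Γ, ∀ x y : X, ‖Q δ γ x - Q δ γ y‖ ≤ L δ γ * ‖x - y‖)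
    (γseq : ℕ → ℝ) (hγΓ : ∀ n, γseq n ∈ Γ)
    (γbar : ℝ) (hγbar : γbar ∈ Γ)
    (hγconv : Tendsto γseq atTop (nhds γbar))
    (hLsum : Summable (fun n => L (γseq (n + 1)) (γseq n) - 1))
    (x : ℕ → X)
    (hxrec : ∀ n, x (n + 1) = Q (γseq (n + 1)) (γseq n) (T (γseq n) (x n)))
    (α : ℝ) (hα0 : 0 < α) (hα1 : α < 1)
    (havg : ∀ γ ∈ Γ, ∀ u v : X,
      ‖T γ u - T γ v‖ ^ 2 + ((1 - α) / α) * ‖(u - T γ u) - (v - T γ v)‖ ^ 2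
        ≤ ‖u - v‖ ^ 2)
    (hTcont : ContinuousOn (fun p : X × ℝ => T p.2 p.1) (Set.univ ×ˢ Γ)) :
    ∃ p : X, T γbar p = p ∧
      (∀ y : X, Tendsto (fun n => ⟪y, x n⟫) atTop (nhds ⟪y, p⟫)) ∧
      (∀ y : X, Tendsto (fun n => ⟪y, T (γseq n) (x n)⟫) atTop (nhds ⟪y, p⟫)) := by
  have hc : 0 < (1 - α) / α := div_pos (by linarith) hα0
  set b : ℕ → ℝ := fun n => ‖x n - T (γseq n) (x n)‖ with hbdef
  -- nonexpansiveness
  have hnonexp : ∀ γ ∈ Γ, ∀ u v : X, ‖T γ u - T γ v‖ ≤ ‖u - v‖ := by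
    intro γ hγ u v
    have h := havg γ hγ u v
    nlinarith [h, norm_nonneg (T γ u - T γ v), norm_nonneg (u - v),
      mul_nonneg hc.le (sq_nonneg ‖(u - T γ u) - (v - T γ v)‖)]
  -- main quantitative lemma, for an arbitrary fixed point of `T γbar`
  have hmain : ∀ pbar : X, T γbar pbar = pbar →
      Tendsto b atTop (nhds 0) ∧
      ∃ ℓ : ℝ, Tendsto (fun n => ‖x n - pbar‖) atTop (nhds ℓ) := by
    intro pbar hpbar
    set p : ℕ → X := fun n => Q (γseq n) γbar pbar with hp
    have hpmem : pbar ∈ {z : X | T γbar z = z} := hpbar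
    have hpfix : ∀ n, T (γseq n) (p n) = p n := fun n =>
      (hbij γbar hγbar (γseq n) (hγΓ n)).mapsTo hpmem
    have hpstep : ∀ n, p (n + 1) = Q (γseq (n + 1)) (γseq n) (p n) := fun n =>
      (hsemi γbar hγbar (γseq n) (hγΓ n) (γseq (n + 1)) (hγΓ (n + 1)) pbar hpbar).symm
    set aa : ℕ → ℝ := fun n => ‖x n - p n‖ with haa
    set l : ℕ → ℝ := fun n => L (γseq (n + 1)) (γseq n) with hl
    have hl1 : ∀ n, 1 ≤ l n := fun n => hLone (γseq n) (hγΓ n) (γseq (n + 1)) (hγΓ (n + 1))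
    have hrec : ∀ n, aa (n + 1) ^ 2 ≤ (l n) ^ 2 * (aa n ^ 2 - ((1 - α) / α) * b n ^ 2) := by
      intro n
      have step1 : aa (n + 1) ≤ l n * ‖T (γseq n) (x n) - p n‖ := by
        have : aa (n + 1) = ‖Q (γseq (n + 1)) (γseq n) (T (γseq n) (x n))
            - Q (γseq (n + 1)) (γseq n) (p n)‖ := by
          rw [haa]; simp only; rw [hxrec n, hpstep n]
        rw [this]
        exact hLip (γseq n) (hγΓ n) (γseq (n + 1)) (hγΓ (n + 1)) _ _
      have step2 : ‖T (γseq n) (x n) - p n‖ ^ 2 + ((1 - α) / α) * b n ^ 2 ≤ aa n ^ 2 := by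
        have h := havg (γseq n) (hγΓ n) (x n) (p n)
        rw [hpfix n] at h
        simpa using h
      have step3 : aa (n + 1) ^ 2 ≤ (l n) ^ 2 * ‖T (γseq n) (x n) - p n‖ ^ 2 := by
        have := pow_le_pow_left₀ (norm_nonneg _) step1 2
        calc aa (n + 1) ^ 2 ≤ (l n * ‖T (γseq n) (x n) - p n‖) ^ 2 := this
        _ = (l n) ^ 2 * ‖T (γseq n) (x n) - p n‖ ^ 2 := by ring
      have step4 : ‖T (γseq n) (x n) - p n‖ ^ 2 ≤ aa n ^ 2 - ((1 - α) / α) * b n ^ 2 := by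
        linarith
      calc aa (n + 1) ^ 2 ≤ (l n) ^ 2 * ‖T (γseq n) (x n) - p n‖ ^ 2 := step3
      _ ≤ (l n) ^ 2 * (aa n ^ 2 - ((1 - α) / α) * b n ^ 2) :=
          mul_le_mul_of_nonneg_left step4 (by positivity)
    obtain ⟨hb0, ℓ', hℓ'⟩ := aux_quasi_fejer aa b l _ hc (fun n => norm_nonneg _)
      (fun n => norm_nonneg _) hl1 hLsum hrec
    refine ⟨hb0, ?_⟩
    -- p n → pbar
    have hγin : Tendsto γseq atTop (nhdsWithin γbar Γ) :=
      tendsto_nhdsWithin_of_tendsto_nhds_of_eventually_within _ hγconv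
        (Eventually.of_forall hγΓ)
    have hid : Q γbar γbar pbar = pbar := by
      have hmem : Q γbar γbar pbar ∈ {z : X | T γbar z = z} :=
        (hbij γbar hγbar γbar hγbar).mapsTo hpmem
      have hQQ : Q γbar γbar (Q γbar γbar pbar) = Q γbar γbar pbar :=
        hsemi γbar hγbar γbar hγbar γbar hγbar pbar hpbar
      exact (hbij γbar hγbar γbar hγbar).injOn hmem hpmem hQQ
    have hpconv : Tendsto p atTop (nhds pbar) := by
      have h := ((hcontQ γbar hγbar pbar hpbar) γbar hγbar).tendsto.comp hγin
      rw [hid] at h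
      exact h
    have he : Tendsto (fun n => ‖p n - pbar‖) atTop (nhds 0) :=
      tendsto_iff_norm_sub_tendsto_zero.mp hpconv
    refine ⟨ℓ', ?_⟩
    have h1 : ∀ n, ‖x n - pbar‖ ≤ aa n + ‖p n - pbar‖ := by
      intro n
      have := norm_add_le (x n - p n) (p n - pbar)
      simpa [sub_add_sub_cancel] using this
    have h2 : ∀ n, aa n - ‖p n - pbar‖ ≤ ‖x n - pbar‖ := by
      intro n
      have h3 : aa n ≤ ‖x n - pbar‖ + ‖pbar - p n‖ := by
        have := norm_add_le (x n - pbar) (pbar - p n)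
        simpa [sub_add_sub_cancel] using this
      rw [norm_sub_rev pbar (p n)] at h3
      linarith
    have hlow : Tendsto (fun n => aa n - ‖p n - pbar‖) atTop (nhds ℓ') := by
      simpa using hℓ'.sub he
    have hhigh : Tendsto (fun n => aa n + ‖p n - pbar‖) atTop (nhds ℓ') := by
      simpa using hℓ'.add he
    exact tendsto_of_tendsto_of_tendsto_of_le_of_le hlow hhigh h2 h1
  obtain ⟨pbar0, hpbar0⟩ := hfix γbar hγbar
  obtain ⟨hb0, ℓ0, hℓ0⟩ := hmain pbar0 hpbar0
  -- boundedness
  obtain ⟨M, hM⟩ : ∃ M : ℝ, ∀ n, ‖x n‖ ≤ M := by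
    obtain ⟨C0, hC0⟩ := hℓ0.bddAbove_range
    refine ⟨C0 + ‖pbar0‖, fun n => ?_⟩
    have h1 : ‖x n - pbar0‖ ≤ C0 := hC0 (Set.mem_range_self n)
    have h2 := norm_add_le (x n - pbar0) pbar0
    simpa using h2.trans (by linarith)
  -- demiclosedness along ultrafilters
  have hdemi : ∀ (𝒰 : Ultrafilter ℕ), (↑𝒰 : Filter ℕ) ≤ atTop → ∀ q : X,
      (∀ y : X, Tendsto (fun n => ⟪y, x n⟫) (↑𝒰) (nhds ⟪y, q⟫)) → T γbar q = q := by
    intro 𝒰 h𝒰 q hq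
    have hTq : Tendsto (fun n => T (γseq n) q) atTop (nhds (T γbar q)) := by
      have hcw : ContinuousWithinAt (fun p : X × ℝ => T p.2 p.1) (Set.univ ×ˢ Γ) (q, γbar) :=
        hTcont (q, γbar) ⟨Set.mem_univ q, hγbar⟩
      have hseq : Tendsto (fun n => ((q, γseq n) : X × ℝ)) atTop
          (nhdsWithin (q, γbar) (Set.univ ×ˢ Γ)) := by
        apply tendsto_nhdsWithin_of_tendsto_nhds_of_eventually_within
        · exact tendsto_const_nhds.prodMk_nhds hγconv
        · exact Eventually.of_forall (fun n => ⟨Set.mem_univ q, hγΓ n⟩)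
      exact hcw.tendsto.comp hseq
    have hδ : Tendsto (fun n => ‖T (γseq n) q - T γbar q‖) atTop (nhds 0) :=
      tendsto_iff_norm_sub_tendsto_zero.mp hTq
    have hbU : Tendsto b (↑𝒰) (nhds 0) := hb0.mono_left h𝒰
    have hδU : Tendsto (fun n => ‖T (γseq n) q - T γbar q‖) (↑𝒰) (nhds 0) := hδ.mono_left h𝒰
    set u := T γbar q with hu
    have hbound : ∀ z : X, ∀ n, |‖x n - z‖| ≤ M + ‖z‖ := by
      intro z n
      rw [abs_of_nonneg (norm_nonneg _)]
      exact (norm_sub_le _ _).trans (add_le_add_left (hM n) _)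
    obtain ⟨r, hr⟩ := aux_ultrafilter_limit (fun n => ‖x n - q‖) (M + ‖q‖) (hbound q) 𝒰
    obtain ⟨ru, hru⟩ := aux_ultrafilter_limit (fun n => ‖x n - u‖) (M + ‖u‖) (hbound u) 𝒰
    have hub : ∀ n, ‖x n - u‖ ≤ ‖x n - q‖ + (b n + ‖T (γseq n) q - u‖) := by
      intro n
      have e1 : x n - u = ((x n - T (γseq n) (x n)) + (T (γseq n) (x n) - T (γseq n) q))
          + (T (γseq n) q - u) := by abel
      have t1 : ‖x n - u‖ ≤ ‖(x n - T (γseq n) (x n)) + (T (γseq n) (x n) - T (γseq n) q)‖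
          + ‖T (γseq n) q - u‖ := by rw [e1]; exact norm_add_le _ _
      have t2 : ‖(x n - T (γseq n) (x n)) + (T (γseq n) (x n) - T (γseq n) q)‖
          ≤ b n + ‖T (γseq n) (x n) - T (γseq n) q‖ := norm_add_le _ _
      have t3 : ‖T (γseq n) (x n) - T (γseq n) q‖ ≤ ‖x n - q‖ :=
        hnonexp (γseq n) (hγΓ n) (x n) q
      linarith
    have hrur : ru ≤ r := by
      have hrhs : Tendsto (fun n => ‖x n - q‖ + (b n + ‖T (γseq n) q - u‖)) (↑𝒰)
          (nhds (r + (0 + 0))) := hr.add (hbU.add hδU)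
      have := le_of_tendsto_of_tendsto' hru hrhs hub
      linarith
    have hrnn : 0 ≤ r := ge_of_tendsto' hr (fun n => norm_nonneg _) |>.trans_eq rfl
    have hrunn : 0 ≤ ru := ge_of_tendsto' hru (fun n => norm_nonneg _)
    have hinner : Tendsto (fun n => ⟪x n - q, u - q⟫) (↑𝒰) (nhds 0) := by
      have he : ∀ n, ⟪x n - q, u - q⟫ = ⟪u - q, x n⟫ - ⟪u - q, q⟫ := by
        intro n
        rw [real_inner_comm, inner_sub_right]
      simp only [he]
      have := (hq (u - q)).sub (tendsto_const_nhds (x := ⟪u - q, q⟫))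
      simpa using this
    have hexp : ∀ n, ‖x n - u‖ ^ 2 = ‖x n - q‖ ^ 2 - 2 * ⟪x n - q, u - q⟫ + ‖u - q‖ ^ 2 := by
      intro n
      have h := norm_sub_sq_real (x n - q) (u - q)
      have e : (x n - q) - (u - q) = x n - u := by abel
      rw [e] at h
      exact h
    have hL2 : Tendsto (fun n => ‖x n - u‖ ^ 2) (↑𝒰) (nhds (ru ^ 2)) := hru.pow 2
    have hL2' : Tendsto (fun n => ‖x n - q‖ ^ 2 - 2 * ⟪x n - q, u - q⟫ + ‖u - q‖ ^ 2) (↑𝒰)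
        (nhds (ru ^ 2)) := by
      have hfe : (fun n => ‖x n - u‖ ^ 2)
          = fun n => ‖x n - q‖ ^ 2 - 2 * ⟪x n - q, u - q⟫ + ‖u - q‖ ^ 2 := funext hexp
      rw [← hfe]
      exact hL2
    have hR2 : Tendsto (fun n => ‖x n - q‖ ^ 2 - 2 * ⟪x n - q, u - q⟫ + ‖u - q‖ ^ 2) (↑𝒰)
        (nhds (r ^ 2 - 2 * 0 + ‖u - q‖ ^ 2)) :=
      (((hr.pow 2).sub (hinner.const_mul 2)).add tendsto_const_nhds)
    have heq : ru ^ 2 = r ^ 2 - 2 * 0 + ‖u - q‖ ^ 2 := tendsto_nhds_unique hL2' hR2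
    have hle0 : ‖u - q‖ ^ 2 ≤ 0 := by nlinarith [pow_le_pow_left₀ hrunn hrur 2]
    have h0 : ‖u - q‖ = 0 := by
      have := sq_nonneg ‖u - q‖
      have h00 : ‖u - q‖ ^ 2 = 0 := le_antisymm hle0 (by positivity)
      exact (pow_eq_zero_iff two_ne_zero).mp h00
    have : u = q := sub_eq_zero.mp (norm_eq_zero.mp h0)
    exact this
  -- uniqueness of weak cluster points (Opial)
  have hclusterEq : ∀ q q' : X, T γbar q = q → T γbar q' = q' →
      ∀ (𝒰 𝒱 : Ultrafilter ℕ), (↑𝒰 : Filter ℕ) ≤ atTop → (↑𝒱 : Filter ℕ) ≤ atTop →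
      (∀ y : X, Tendsto (fun n => ⟪y, x n⟫) (↑𝒰) (nhds ⟪y, q⟫)) →
      (∀ y : X, Tendsto (fun n => ⟪y, x n⟫) (↑𝒱) (nhds ⟪y, q'⟫)) → q = q' := by
    intro q q' hqf hq'f 𝒰 𝒱 h𝒰 h𝒱 hcq hcq'
    obtain ⟨-, ℓ1, hℓ1⟩ := hmain q hqf
    obtain ⟨-, ℓ2, hℓ2⟩ := hmain q' hq'f
    have hd : ∀ n, ⟪q - q', x n⟫
        = (‖x n - q'‖ ^ 2 - ‖x n - q‖ ^ 2 + ‖q‖ ^ 2 - ‖q'‖ ^ 2) / 2 := by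
      intro n
      have e1 := norm_sub_sq_real (x n) q
      have e2 := norm_sub_sq_real (x n) q'
      have e3 : ⟪q - q', x n⟫ = ⟪x n, q⟫ - ⟪x n, q'⟫ := by
        rw [inner_sub_left, real_inner_comm q (x n), real_inner_comm q' (x n)]
      rw [e3]; linarith
    set cst : ℝ := (ℓ2 ^ 2 - ℓ1 ^ 2 + ‖q‖ ^ 2 - ‖q'‖ ^ 2) / 2 with hcst
    have hdlim : Tendsto (fun n => ⟪q - q', x n⟫) atTop (nhds cst) := by
      have : Tendsto (fun n => (‖x n - q'‖ ^ 2 - ‖x n - q‖ ^ 2 + ‖q‖ ^ 2 - ‖q'‖ ^ 2) / 2)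
          atTop (nhds cst) := by
        rw [hcst]
        exact ((((hℓ2.pow 2).sub (hℓ1.pow 2)).add tendsto_const_nhds).sub
          tendsto_const_nhds).div_const 2
      simpa only [← hd] using this
    have h1 : ⟪q - q', q⟫ = cst :=
      tendsto_nhds_unique (hcq (q - q')) (hdlim.mono_left h𝒰)
    have h2 : ⟪q - q', q'⟫ = cst :=
      tendsto_nhds_unique (hcq' (q - q')) (hdlim.mono_left h𝒱)
    have h3 : ⟪q - q', q - q'⟫ = 0 := by
      rw [inner_sub_right, h1, h2]; ring
    exact sub_eq_zero.mp (inner_self_eq_zero.mp h3)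
  -- put it together
  set 𝒰₀ : Ultrafilter ℕ := Ultrafilter.of atTop with h𝒰₀
  have h𝒰₀le : (↑𝒰₀ : Filter ℕ) ≤ atTop := Ultrafilter.of_le _
  obtain ⟨q, hq⟩ := aux_weak_cluster x M hM 𝒰₀
  have hqfix : T γbar q = q := hdemi 𝒰₀ h𝒰₀le q hq
  have hweak : ∀ y : X, Tendsto (fun n => ⟪y, x n⟫) atTop (nhds ⟪y, q⟫) := by
    intro y
    rw [tendsto_iff_ultrafilter]
    intro 𝒱 h𝒱
    obtain ⟨q', hq'⟩ := aux_weak_cluster x M hM 𝒱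
    have hq'fix : T γbar q' = q' := hdemi 𝒱 h𝒱 q' hq'
    have hqq : q = q' := hclusterEq q q' hqfix hq'fix 𝒰₀ 𝒱 h𝒰₀le h𝒱 hq hq'
    rw [hqq]
    exact hq' y
  refine ⟨q, hqfix, hweak, fun y => ?_⟩
  have hz : Tendsto (fun n => ⟪y, T (γseq n) (x n) - x n⟫) atTop (nhds 0) := by
    apply squeeze_zero_norm (a := fun n => ‖y‖ * b n)
    · intro n
      rw [Real.norm_eq_abs]
      calc |⟪y, T (γseq n) (x n) - x n⟫| ≤ ‖y‖ * ‖T (γseq n) (x n) - x n‖ :=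
            abs_real_inner_le_norm _ _
      _ = ‖y‖ * b n := by rw [hbdef]; simp only; rw [norm_sub_rev]
    · simpa using hb0.const_mul ‖y‖
  have hsum' := (hweak y).add hz
  have he : ∀ n, ⟪y, T (γseq n) (x n)⟫ = ⟪y, x n⟫ + ⟪y, T (γseq n) (x n) - x n⟫ := by
    intro n
    rw [← inner_add_right, add_sub_cancel]
  have hfe : (fun n => ⟪y, T (γseq n) (x n)⟫)
      = fun n => ⟪y, x n⟫ + ⟪y, T (γseq n) (x n) - x n⟫ := funext he
  rw [hfe]
  simpa using hsum'
end

section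
/- One-dimensional DR example with disjoint fixed-point sets: In X = ℝ, let A := N_{{1}} (the normal cone to the singleton {1}) and let B := ∂g with g = −ln on (0,∞), so J_{γB}x = (x + √(x² + 4γ))/2. Then for every γ > 0, the Douglas–Rachford operator satisfies T_γ x = (x + √((2 − x)² + 4γ))/2, and Fix T_γ = {1 + γ}. In particular, Fix T_γ ∩ Fix T_δ = ∅ whenever γ ≠ δ. -/
open Filter
open scoped RealInnerProductSpace NNReal

/-- The normal cone operator to the singleton {1} in ℝ. -/
def normalConeOne : ℝ → Set ℝ := fun x => if x = 1 then Set.univ else ∅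

/-- The subdifferential of g = -ln on (0, ∞). -/
def negLogSubdiff : ℝ → Set ℝ := fun x => if 0 < x then {-(1 / x)} else ∅

/-- The resolvent of γ·∂(-ln). -/
noncomputable def JnegLog (γ x : ℝ) : ℝ := (x + Real.sqrt (x ^ 2 + 4 * γ)) / 2

/-- The Douglas–Rachford operator for (γ N_{1}, γ ∂(-ln)),
using J_{γA} = const 1, so R_{γA} x = 2 - x. -/
noncomputable def TDR (γ x : ℝ) : ℝ := x - 1 + JnegLog γ ((2:ℝ) * 1 - x)

theorem oneDim_DR_disjoint_fixed_points :
    ∀ γ : ℝ, 0 < γ →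
      IsResolventOf (fun _ : ℝ => (1:ℝ)) normalConeOne γ ∧
      IsResolventOf (JnegLog γ) negLogSubdiff γ ∧
      (∀ x : ℝ, TDR γ x = (x + Real.sqrt ((2 - x) ^ 2 + 4 * γ)) / 2) ∧
      {x : ℝ | TDR γ x = x} = {1 + γ} ∧
      (∀ δ : ℝ, 0 < δ → γ ≠ δ →
        {x : ℝ | TDR γ x = x} ∩ {x : ℝ | TDR δ x = x} = ∅) := by

  have hfix : ∀ γ : ℝ, 0 < γ → {x : ℝ | TDR γ x = x} = {1 + γ} := by
    intro γ hγ
    ext x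
    simp only [Set.mem_setOf_eq, Set.mem_singleton_iff, TDR, JnegLog]
    constructor
    · intro h
      set s := Real.sqrt ((2*1 - x)^2 + 4*γ) with hsdef
      have hsx : s = x := by linarith
      have hx : 0 ≤ x := by rw [← hsx, hsdef]; exact Real.sqrt_nonneg _
      have h2 : s^2 = (2*1 - x)^2 + 4*γ := by
        rw [hsdef]; exact Real.sq_sqrt (by nlinarith [sq_nonneg (2*1 - x)])
      nlinarith
    · intro h; subst h
      rw [show ((2:ℝ)*1 - (1+γ))^2 + 4*γ = (1+γ)^2 by ring,
        Real.sqrt_sq (by linarith : (0:ℝ) ≤ 1 + γ)]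
      ring
  intro γ hγ
  refine ⟨?_, ?_, ?_, hfix γ hγ, ?_⟩
  · intro x
    simp [normalConeOne]
  · intro x
    have hs2 : Real.sqrt (x^2 + 4*γ) ^ 2 = x^2 + 4*γ :=
      Real.sq_sqrt (by nlinarith [sq_nonneg x])
    have hsn : 0 ≤ Real.sqrt (x^2 + 4*γ) := Real.sqrt_nonneg _
    have hJ : 0 < JnegLog γ x := by
      unfold JnegLog; nlinarith
    simp only [negLogSubdiff, if_pos hJ, Set.mem_singleton_iff, smul_eq_mul]
    unfold JnegLog at *
    have hne : x + Real.sqrt (x^2 + 4*γ) ≠ 0 := by nlinarith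
    field_simp
    have key : γ * 2 ^ 2 / (x + Real.sqrt (x^2 + 4*γ)) = x + Real.sqrt (x^2 + 4*γ) - x * 2 := by
      rw [div_eq_iff hne]; nlinarith
    rw [show x ^ 2 + γ * 4 = x ^ 2 + 4 * γ by ring, key]
    ring
  · intro x
    simp only [TDR, JnegLog]
    rw [show (2:ℝ)*1 - x = 2 - x by ring]
    ring
  · intro δ hδ hne
    rw [hfix γ hγ, hfix δ hδ]
    simp only [Set.singleton_inter_eq_empty, Set.mem_singleton_iff]
    intro h
    exact hne (by linarith)
end
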